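/- arXiv:2207.05168 — 6 statements merged into one kernel-verified Lean document; each statement's English description precedes it below -/
import Mathlib

section
/- Let G' be a simple graph on N ≥ 1 vertices and let Ã be a chiral adjacency matrix on G' whose rows all sum to zero, i.e. Ã·1 = 0 for the all-ones vector 1. Let G be the cone over G' with apex labeled 1, and let H be the Hermitian matrix on G obtained by replacing the G'-block of the adjacency matrix of G by Ã while keeping all entries between the apex and the other vertices equal to 1. Then for every real t, the return probability at the apex equals |(exp(−itH))_{11}|² = cos²(√N · t). -/
open Matrix

/-- The cone over a graph `G`: one new vertex (the apex, `none`) adjacent to every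
vertex of `G`. -/
def coneGraph {V : Type*} (G : SimpleGraph V) : SimpleGraph (Option V) where
  Adj x y :=
    match x, y with
    | none, none => False
    | none, some _ => True
    | some _, none => True
    | some a, some b => G.Adj a b
  symm := ⟨by
    rintro (_ | a) (_ | b) h
    · exact h
    · exact trivial
    · exact trivial
    · exact h.symm⟩
  loopless := ⟨by
    rintro (_ | a) h
    · exact h
    · exact h.ne rfl⟩

/-- A chiral adjacency matrix on a simple graph `G`: a Hermitian matrix whose entries
have modulus one on edges of `G` and vanish elsewhere. -/
def IsChiralAdjacency {V : Type*} (G : SimpleGraph V) (A : Matrix V V ℂ) : Prop :=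
  A.IsHermitian ∧ (∀ j k, G.Adj j k → ‖A j k‖ = 1) ∧
    ∀ j k, ¬ G.Adj j k → A j k = 0

/-- If the rows of a chiral adjacency matrix `Ã` on `G'` all sum to zero, then the
chiral quantum walk on the cone over `G'` obtained by replacing the `G'`-block of the
adjacency matrix by `Ã` (keeping apex entries equal to `1`) is swift: the return
probability at the apex is `cos²(√N t)`. -/
theorem swift_stmt_2 {N : ℕ} (hN : 1 ≤ N)
    (G' : SimpleGraph (Fin N)) (Atil : Matrix (Fin N) (Fin N) ℂ)
    (hA : IsChiralAdjacency G' Atil) (hrow : Atil *ᵥ (fun _ => 1) = 0)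
    (H : Matrix (Option (Fin N)) (Option (Fin N)) ℂ)
    (hH00 : H none none = 0)
    (hH0 : ∀ j : Fin N, H none (some j) = 1)
    (hH0' : ∀ j : Fin N, H (some j) none = 1)
    (hHblock : ∀ j k : Fin N, H (some j) (some k) = Atil j k)
    (t : ℝ) :
    ‖(NormedSpace.exp ((-(t : ℂ) * Complex.I) • H)) none none‖ ^ 2 =
      Real.cos (Real.sqrt N * t) ^ 2 := by
  classical
  set α : ℂ := -(t : ℂ) * Complex.I with hαdef
  set M : Matrix (Option (Fin N)) (Option (Fin N)) ℂ := α • H with hMdef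
  set e : Option (Fin N) → ℂ := fun x => Option.rec 1 (fun _ => 0) x with hedef
  set w : Option (Fin N) → ℂ := fun x => Option.rec 0 (fun _ => 1) x with hwdef
  have he : H *ᵥ e = w := by
    funext x
    cases x with
    | none => simp [mulVec, dotProduct, Fintype.sum_option, hedef, hwdef, hH00]
    | some j => simp [mulVec, dotProduct, Fintype.sum_option, hedef, hwdef, hH0' j]
  have hw : H *ᵥ w = (N : ℂ) • e := by
    funext x
    cases x with
    | none =>
      simp [mulVec, dotProduct, Fintype.sum_option, hedef, hwdef, hH0, hH00]
    | some j =>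
      have h0 : (Atil *ᵥ (fun _ => 1)) j = 0 := by rw [hrow]; rfl
      simp only [mulVec, dotProduct] at h0 ⊢
      simp [Fintype.sum_option, hedef, hwdef, hHblock, h0, hH0' j] at h0 ⊢
      simpa using h0
  set c : ℂ := α ^ 2 * N with hcdef
  have hMe : M *ᵥ e = α • w := by rw [hMdef, smul_mulVec, he]
  have hMw : M *ᵥ w = (α * N) • e := by
    rw [hMdef, smul_mulVec, hw, smul_smul]
  have key : ∀ k : ℕ, M ^ (2 * k) *ᵥ e = c ^ k • e ∧
      M ^ (2 * k + 1) *ᵥ e = (α * c ^ k) • w := by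
    intro k
    induction k with
    | zero =>
      constructor
      · simp
      · simpa using hMe
    | succ k ih =>
      have heven : M ^ (2 * (k + 1)) *ᵥ e = c ^ (k + 1) • e := by
        have h2 : 2 * (k + 1) = (2 * k + 1) + 1 := by ring
        rw [h2, pow_succ', ← mulVec_mulVec, ih.2, mulVec_smul, hMw, smul_smul]
        congr 1
        rw [hcdef]; ring
      refine ⟨heven, ?_⟩
      rw [pow_succ', ← mulVec_mulVec, heven, mulVec_smul, hMe, smul_smul, mul_comm]
  have hent : ∀ A : Matrix (Option (Fin N)) (Option (Fin N)) ℂ,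
      (A *ᵥ e) none = A none none := by
    intro A
    simp [mulVec, dotProduct, Fintype.sum_option, hedef]
  have heven : ∀ k : ℕ, (M ^ (2 * k)) none none = c ^ k := by
    intro k
    rw [← hent (M ^ (2 * k)), (key k).1]
    simp [hedef]
  have hodd : ∀ k : ℕ, (M ^ (2 * k + 1)) none none = 0 := by
    intro k
    rw [← hent (M ^ (2 * k + 1)), (key k).2]
    simp [hwdef]
  -- the exponential series entry
  have hs : HasSum (fun n : ℕ => ((n.factorial : ℂ))⁻¹ * (M ^ n) none none)
      ((NormedSpace.exp M) none none) := by
    letI : SeminormedRing (Matrix (Option (Fin N)) (Option (Fin N)) ℂ) :=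
      Matrix.linftyOpSemiNormedRing
    letI : NormedRing (Matrix (Option (Fin N)) (Option (Fin N)) ℂ) :=
      Matrix.linftyOpNormedRing
    letI : NormedAlgebra ℂ (Matrix (Option (Fin N)) (Option (Fin N)) ℂ) :=
      Matrix.linftyOpNormedAlgebra
    have h := NormedSpace.exp_series_hasSum_exp' (𝕂 := ℂ) M
    have hcont : Continuous fun A : Matrix (Option (Fin N)) (Option (Fin N)) ℂ =>
        A none none :=
      (continuous_apply (none : Option (Fin N))).comp (continuous_apply none)
    have := h.map (AddMonoidHom.mk'
      (fun A : Matrix (Option (Fin N)) (Option (Fin N)) ℂ => A none none)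
      (fun _ _ => rfl)) hcont
    exact this
  set z : ℝ := Real.sqrt N * t with hzdef
  have hc' : ∀ k : ℕ, c ^ k = (-1 : ℂ) ^ k * (z : ℂ) ^ (2 * k) := by
    intro k
    have hz2 : ((z : ℂ)) ^ 2 = (N : ℂ) * (t : ℂ) ^ 2 := by
      rw [hzdef]
      push_cast
      rw [mul_pow]
      norm_cast
      rw [Real.sq_sqrt (by positivity : (0:ℝ) ≤ (N:ℝ))]
    have hcval : c = (-1 : ℂ) * (z : ℂ) ^ 2 := by
      rw [hcdef, hz2, hαdef]
      have : Complex.I ^ 2 = -1 := Complex.I_sq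
      ring_nf
      rw [Complex.I_sq]
      ring
    rw [hcval, pow_mul, ← mul_pow]
  have hcos : HasSum (fun k : ℕ => (((2 * k).factorial : ℂ))⁻¹ * (M ^ (2 * k)) none none)
      (Complex.cos (z : ℂ)) := by
    have h := Complex.hasSum_cos (z : ℂ)
    convert h using 2 with k
    rw [heven k, hc' k]
    field_simp
  have hoddsum : HasSum
      (fun k : ℕ => (((2 * k + 1).factorial : ℂ))⁻¹ * (M ^ (2 * k + 1)) none none)
      0 := by
    have : (fun k : ℕ => (((2 * k + 1).factorial : ℂ))⁻¹ * (M ^ (2 * k + 1)) none none)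
        = fun _ => (0 : ℂ) := by
      funext k; rw [hodd k]; ring
    rw [this]
    exact hasSum_zero
  have htot : HasSum (fun n : ℕ => ((n.factorial : ℂ))⁻¹ * (M ^ n) none none)
      (Complex.cos (z : ℂ) + 0) := HasSum.even_add_odd hcos hoddsum
  rw [add_zero] at htot
  have hval : (NormedSpace.exp M) none none = Complex.cos (z : ℂ) := hs.unique htot
  rw [hval, ← Complex.ofReal_cos, Complex.norm_real, Real.norm_eq_abs, sq_abs]
end

section
/- Let G be a finite simple graph and let v be a vertex of G of degree N ≥ 1. Suppose there exists a chiral Hamiltonian H_s on G generating a swift chiral quantum walk from v, i.e. |(exp(−itH_s))_{vv}|² = cos²(√N · t) for all t ≥ 0. Then the swift walk reaches a state orthogonal to v at time τ_s = π/(2√N), i.e. (exp(−iτ_s H_s))_{vv} = 0, and this is the shortest possible such time among all chiral Hamiltonians on G: for every chiral Hamiltonian H on G and every t with 0 < t < π/(2√N), one has (exp(−itH))_{vv} ≠ 0. -/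
open Matrix

section AuxAnalysis

private lemma sin_lb' {s a : ℝ} (hs : 0 ≤ s) (hsa : s ≤ a) (ha : a ≤ Real.pi) :
    s * Real.sin a ≤ a * Real.sin s := by
  rcases eq_or_lt_of_le hsa with rfl | hlt
  · exact le_of_eq (by ring)
  rcases eq_or_lt_of_le hs with rfl | hs0
  · simp
  have ha0 : 0 < a := hs0.trans hlt
  have hc := strictConcaveOn_sin_Icc.concaveOn
  have hmem0 : (0:ℝ) ∈ Set.Icc 0 Real.pi := ⟨le_rfl, Real.pi_pos.le⟩
  have hmema : a ∈ Set.Icc 0 Real.pi := ⟨ha0.le, ha⟩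
  have hw1 : 0 ≤ s / a := div_nonneg hs ha0.le
  have hw2 : 0 ≤ 1 - s / a := by
    have : s / a ≤ 1 := (div_le_one ha0).mpr hsa
    linarith
  have h := hc.2 hmema hmem0 hw1 hw2 (by ring)
  simp only [smul_eq_mul, Real.sin_zero, mul_zero, add_zero] at h
  have hsa' : s / a * a = s := div_mul_cancel₀ s ha0.ne'
  rw [hsa'] at h
  have h2 := mul_le_mul_of_nonneg_left h ha0.le
  calc s * Real.sin a = a * (s / a * Real.sin a) := by field_simp
    _ ≤ a * Real.sin s := h2

private lemma cos_tangent_lb' {a : ℝ} (ha0 : 0 < a) (ha : a < Real.pi / 2) (s : ℝ) :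
    Real.cos a - Real.sin a / (2 * a) * (s ^ 2 - a ^ 2) ≤ Real.cos s := by
  have hpi := Real.pi_pos
  set k := Real.sin a / (2 * a) with hk
  have hapi : a ≤ Real.pi := by linarith
  have hsina : 0 ≤ Real.sin a := Real.sin_nonneg_of_nonneg_of_le_pi ha0.le hapi
  have hk0 : 0 ≤ k := div_nonneg hsina (by linarith)
  have hder : ∀ x : ℝ, HasDerivAt (fun y => Real.cos y + k * y ^ 2)
      (-Real.sin x + k * (2 * x)) x := by
    intro x
    have h2 : HasDerivAt (fun y : ℝ => y ^ 2) (2 * x) x := by simpa using hasDerivAt_pow 2 x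
    exact (Real.hasDerivAt_cos x).add (h2.const_mul k)
  have hcont : Continuous fun y => Real.cos y + k * y ^ 2 := by continuity
  have hanti : AntitoneOn (fun y => Real.cos y + k * y ^ 2) (Set.Icc 0 a) := by
    apply antitoneOn_of_deriv_nonpos (convex_Icc 0 a) hcont.continuousOn
    · intro x _; exact (hder x).differentiableAt.differentiableWithinAt
    · intro x hx
      rw [interior_Icc] at hx
      rw [(hder x).deriv]
      have hsl := sin_lb' hx.1.le hx.2.le hapi
      have h3 : k * (2 * x) = x * Real.sin a / a := by rw [hk]; field_simp
      have h4 : x * Real.sin a / a ≤ Real.sin x := (div_le_iff₀ ha0).mpr (by linarith)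
      rw [h3]; linarith
  have hmono : MonotoneOn (fun y => Real.cos y + k * y ^ 2) (Set.Ici a) := by
    apply monotoneOn_of_deriv_nonneg (convex_Ici a) hcont.continuousOn
    · intro x _; exact (hder x).differentiableAt.differentiableWithinAt
    · intro x hx
      rw [interior_Ici] at hx
      rw [(hder x).deriv]
      have hx0 : 0 < x := ha0.trans hx
      have key : a * Real.sin x ≤ x * Real.sin a := by
        rcases le_or_gt x Real.pi with hxpi | hxpi
        · exact sin_lb' ha0.le hx.le hxpi
        · have h1 : Real.sin x ≤ 1 := Real.sin_le_one x
          have h2 : a * Real.sin (Real.pi / 2) ≤ (Real.pi / 2) * Real.sin a :=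
            sin_lb' ha0.le ha.le (by linarith)
          rw [Real.sin_pi_div_two, mul_one] at h2
          nlinarith
      have h4 : Real.sin x ≤ x * Real.sin a / a := (le_div_iff₀ ha0).mpr (by linarith)
      have h3 : k * (2 * x) = x * Real.sin a / a := by rw [hk]; field_simp
      rw [h3]; linarith
  have main : ∀ u : ℝ, 0 ≤ u →
      Real.cos a + k * a ^ 2 ≤ Real.cos u + k * u ^ 2 := by
    intro u hu
    rcases le_total u a with h | h
    · exact hanti ⟨hu, h⟩ ⟨ha0.le, le_rfl⟩ h
    · exact hmono Set.self_mem_Ici h h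
  have := main |s| (abs_nonneg s)
  rw [Real.cos_abs, sq_abs] at this
  linarith

private lemma exp_entry' {V : Type*} [Fintype V] [DecidableEq V] (H : Matrix V V ℂ)
    (hH : H.IsHermitian) (c : ℂ) (v : V) :
    (NormedSpace.exp (c • H)) v v =
      ∑ j, (Complex.normSq ((hH.eigenvectorUnitary : Matrix V V ℂ) v j) : ℂ) *
        Complex.exp (c * hH.eigenvalues j) := by
  set U : Matrix V V ℂ := (hH.eigenvectorUnitary : Matrix V V ℂ) with hU
  have hUU : U * star U = 1 := (Matrix.mem_unitaryGroup_iff).mp hH.eigenvectorUnitary.2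
  have hstar : star U = U⁻¹ := Matrix.inv_eq_right_inv hUU |>.symm
  have hunit : IsUnit U := by
    apply Matrix.isUnit_iff_isUnit_det _ |>.mpr
    exact Matrix.isUnit_det_of_right_inverse hUU
  have hsp : c • H = U * (c • Matrix.diagonal (fun j => (hH.eigenvalues j : ℂ))) * U⁻¹ := by
    rw [← hstar]
    conv_lhs => rw [hH.spectral_theorem, Unitary.conjStarAlgAut_apply]
    rw [Matrix.mul_smul, Matrix.smul_mul]
    rfl
  rw [hsp, Matrix.exp_conj U _ hunit]
  have hdiag : c • Matrix.diagonal (fun j => (hH.eigenvalues j : ℂ)) =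
      Matrix.diagonal (fun j => c * (hH.eigenvalues j : ℂ)) := by
    ext i j
    by_cases h : i = j <;> simp [Matrix.diagonal_apply, h]
  rw [hdiag, Matrix.exp_diagonal, ← hstar]
  simp only [Matrix.mul_apply, Matrix.diagonal_apply, Matrix.star_apply, mul_ite, mul_zero,
    Finset.sum_ite_eq', Finset.mem_univ, if_true, Pi.coe_exp, ← Complex.exp_eq_exp_ℂ]
  apply Finset.sum_congr rfl
  intro j _
  have h1 : U v j * Complex.exp (c * hH.eigenvalues j) * star (U v j)
      = (U v j * star (U v j)) * Complex.exp (c * hH.eigenvalues j) := by ring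
  rw [h1]
  have h2 : U v j * star (U v j) = (Complex.normSq (U v j) : ℂ) := Complex.mul_conj _
  rw [h2]

end AuxAnalysis

/-- A chiral Hamiltonian on a simple graph `G`: a Hermitian matrix whose off-diagonal
entries have modulus one on edges of `G` and vanish on non-edges, with arbitrary (real)
diagonal entries. -/
def IsChiralHamiltonian {V : Type*} (G : SimpleGraph V) (H : Matrix V V ℂ) : Prop :=
  H.IsHermitian ∧ (∀ j k, j ≠ k → G.Adj j k → ‖H j k‖ = 1) ∧
    ∀ j k, j ≠ k → ¬ G.Adj j k → H j k = 0

private lemma no_orth' {V : Type*} [Fintype V] [DecidableEq V] (G : SimpleGraph V)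
    [DecidableRel G.Adj] (v : V) (N : ℕ) (hdeg : G.degree v = N) (hN : 1 ≤ N)
    (H : Matrix V V ℂ) (hH : IsChiralHamiltonian G H)
    (t : ℝ) (ht : 0 < t) (ht2 : t < Real.pi / (2 * Real.sqrt N)) :
    (NormedSpace.exp ((-(t : ℂ) * Complex.I) • H)) v v ≠ 0 := by
  obtain ⟨herm, hadj, hnadj⟩ := hH
  set U : Matrix V V ℂ := (herm.eigenvectorUnitary : Matrix V V ℂ) with hUdef
  set lam : V → ℝ := herm.eigenvalues with hlamdef
  set p : V → ℝ := fun j => Complex.normSq (U v j) with hpdef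
  have hp0 : ∀ j, 0 ≤ p j := fun j => Complex.normSq_nonneg _
  have hUU : U * star U = 1 := (Matrix.mem_unitaryGroup_iff).mp herm.eigenvectorUnitary.2
  have hUU' : star U * U = 1 := (Matrix.mem_unitaryGroup_iff').mp herm.eigenvectorUnitary.2
  have entry : ∀ d : V → ℂ, (U * Matrix.diagonal d * star U) v v = ∑ j, (p j : ℂ) * d j := by
    intro d
    simp only [Matrix.mul_apply, Matrix.diagonal_apply, Matrix.star_apply, mul_ite, mul_zero,
      Finset.sum_ite_eq', Finset.mem_univ, if_true]
    refine Finset.sum_congr rfl fun j _ => ?_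
    have h1 : U v j * d j * star (U v j) = (U v j * star (U v j)) * d j := by ring
    have h2 : U v j * star (U v j) = (Complex.normSq (U v j) : ℂ) := Complex.mul_conj _
    rw [h1, h2]
  have hsum1 : ∑ j, p j = 1 := by
    have h : (U * star U) v v = (1 : Matrix V V ℂ) v v := by rw [hUU]
    rw [Matrix.mul_apply, Matrix.one_apply_eq] at h
    have h2 : ∑ j, ((p j : ℝ) : ℂ) = 1 := by
      rw [← h]
      refine Finset.sum_congr rfl fun j _ => ?_
      rw [Matrix.star_apply]
      exact (Complex.mul_conj (U v j)).symm
    have h3 : ((∑ j, p j : ℝ) : ℂ) = ((1 : ℝ) : ℂ) := by push_cast; rw [h2]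
    exact_mod_cast h3
  have hspec : H = U * Matrix.diagonal (fun j => (lam j : ℂ)) * star U := by
    have hst := herm.spectral_theorem
    rw [Unitary.conjStarAlgAut_apply] at hst
    exact hst
  set m : ℝ := ∑ j, p j * lam j with hmdef
  have hm : H v v = ((m : ℝ) : ℂ) := by
    conv_lhs => rw [hspec]
    rw [entry, hmdef]
    push_cast
    rfl
  have hHH : H * H = U * Matrix.diagonal (fun j => ((lam j : ℂ)) ^ 2) * star U := by
    conv_lhs => rw [hspec]
    have hassoc : (U * Matrix.diagonal (fun j => (lam j : ℂ)) * star U) *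
        (U * Matrix.diagonal (fun j => (lam j : ℂ)) * star U)
        = U * (Matrix.diagonal (fun j => (lam j : ℂ)) * (star U * U) *
          Matrix.diagonal (fun j => (lam j : ℂ))) * star U := by
      simp only [Matrix.mul_assoc]
    rw [hassoc, hUU', Matrix.mul_one, Matrix.diagonal_mul_diagonal]
    congr 1
    congr 1
    funext j
    ring
  have hmom2C : ((∑ j, p j * lam j ^ 2 : ℝ) : ℂ) = (H * H) v v := by
    rw [hHH, entry]
    push_cast
    rfl
  have hHvv2 : (H * H) v v = ((∑ k, Complex.normSq (H v k) : ℝ) : ℂ) := by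
    rw [Matrix.mul_apply]
    push_cast
    refine Finset.sum_congr rfl fun k _ => ?_
    rw [← herm.apply k v]
    exact Complex.mul_conj _
  have hdegsum : ∑ k ∈ Finset.univ.erase v, Complex.normSq (H v k) = N := by
    have hterm : ∀ k ∈ Finset.univ.erase v,
        Complex.normSq (H v k) = if G.Adj v k then 1 else 0 := by
      intro k hk
      have hkv : k ≠ v := Finset.ne_of_mem_erase hk
      by_cases hA : G.Adj v k
      · have h1 := hadj v k (Ne.symm hkv) hA
        rw [← Complex.sq_norm, h1]
        simp [hA]
      · rw [hnadj v k (Ne.symm hkv) hA]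
        simp [hA]
    rw [Finset.sum_congr rfl hterm, Finset.sum_boole]
    have hfil : (Finset.univ.erase v).filter (G.Adj v) = G.neighborFinset v := by
      ext k
      simp only [Finset.mem_filter, Finset.mem_erase, Finset.mem_univ, true_and, and_true,
        SimpleGraph.mem_neighborFinset]
      constructor
      · exact fun h => h.2
      · exact fun h => ⟨(G.ne_of_adj h).symm, h⟩
    rw [hfil, SimpleGraph.card_neighborFinset_eq_degree, hdeg]
  have hmvv : Complex.normSq (H v v) = m ^ 2 := by
    rw [hm, Complex.normSq_ofReal, sq]
  have hmom2 : ∑ j, p j * lam j ^ 2 = m ^ 2 + N := by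
    have h1 : ((∑ j, p j * lam j ^ 2 : ℝ) : ℂ)
        = ((∑ k, Complex.normSq (H v k) : ℝ) : ℂ) := hmom2C.trans hHvv2
    have h2 : ∑ j, p j * lam j ^ 2 = ∑ k, Complex.normSq (H v k) := by exact_mod_cast h1
    rw [h2, ← Finset.add_sum_erase Finset.univ _ (Finset.mem_univ v), hmvv, hdegsum]
  have hsqrtpos : 0 < Real.sqrt N := Real.sqrt_pos.mpr (by exact_mod_cast hN)
  set a : ℝ := Real.sqrt N * t with hadef
  have ha0 : 0 < a := mul_pos hsqrtpos ht
  have hapi : a < Real.pi / 2 := by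
    have h := (lt_div_iff₀ (by positivity : (0:ℝ) < 2 * Real.sqrt N)).mp ht2
    have h2 : 2 * a = t * (2 * Real.sqrt N) := by rw [hadef]; ring
    linarith
  set k : ℝ := Real.sin a / (2 * a) with hkdef
  intro hf
  set z : ℂ := Complex.exp (((m * t : ℝ) : ℂ) * Complex.I)
      * (NormedSpace.exp ((-(t : ℂ) * Complex.I) • H)) v v with hzdef
  have hz0 : z = 0 := by rw [hzdef, hf, mul_zero]
  have hfeq : (NormedSpace.exp ((-(t : ℂ) * Complex.I) • H)) v v
      = ∑ j, (p j : ℂ) * Complex.exp (-(t : ℂ) * Complex.I * lam j) :=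
    exp_entry' H herm _ v
  have hzeq : z = ∑ j, (p j : ℂ)
      * Complex.exp (((t * (m - lam j) : ℝ) : ℂ) * Complex.I) := by
    rw [hzdef, hfeq, Finset.mul_sum]
    refine Finset.sum_congr rfl fun j _ => ?_
    rw [← mul_assoc, mul_comm (Complex.exp _) ((p j : ℂ)), mul_assoc, ← Complex.exp_add]
    congr 1
    push_cast
    ring
  have hRe : z.re = ∑ j, p j * Real.cos (t * (m - lam j)) := by
    rw [hzeq, Complex.re_sum]
    refine Finset.sum_congr rfl fun j _ => ?_
    rw [Complex.re_ofReal_mul, Complex.exp_ofReal_mul_I_re]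
  have hvar : ∑ j, p j * (m - lam j) ^ 2 = N := by
    have expand : ∀ j, p j * (m - lam j) ^ 2
        = m ^ 2 * p j - 2 * m * (p j * lam j) + p j * lam j ^ 2 := fun j => by ring
    rw [Finset.sum_congr rfl (fun j _ => expand j), Finset.sum_add_distrib,
      Finset.sum_sub_distrib, ← Finset.mul_sum, ← Finset.mul_sum, hsum1, ← hmdef, hmom2]
    ring
  have hbound : Real.cos a ≤ z.re := by
    rw [hRe]
    have step : ∀ j, p j * (Real.cos a - k * ((t * (m - lam j)) ^ 2 - a ^ 2))
        ≤ p j * Real.cos (t * (m - lam j)) := fun j =>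
      mul_le_mul_of_nonneg_left (cos_tangent_lb' ha0 hapi _) (hp0 j)
    have hsumlb := Finset.sum_le_sum (fun j (_ : j ∈ Finset.univ) => step j)
    have hL : ∑ j, p j * (Real.cos a - k * ((t * (m - lam j)) ^ 2 - a ^ 2))
        = Real.cos a := by
      have e : ∀ j, p j * (Real.cos a - k * ((t * (m - lam j)) ^ 2 - a ^ 2))
          = Real.cos a * p j - k * t ^ 2 * (p j * (m - lam j) ^ 2) + k * a ^ 2 * p j :=
        fun j => by ring
      rw [Finset.sum_congr rfl (fun j _ => e j), Finset.sum_add_distrib,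
        Finset.sum_sub_distrib, ← Finset.mul_sum, ← Finset.mul_sum, ← Finset.mul_sum,
        hsum1, hvar]
      have ha2 : a ^ 2 = N * t ^ 2 := by
        rw [hadef, mul_pow, Real.sq_sqrt (Nat.cast_nonneg N)]
      rw [ha2]
      ring
    linarith
  have hcos : 0 < Real.cos a := Real.cos_pos_of_mem_Ioo ⟨by linarith, hapi⟩
  rw [hz0] at hbound
  simp only [Complex.zero_re] at hbound
  linarith

/-- A swift chiral quantum walk (when it exists) is the fastest at leaving its starting
vertex `v` of degree `N`: it reaches a state orthogonal to `v` at time `τ_s = π/(2√N)`,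
and no chiral Hamiltonian on `G` can evolve the state localized at `v` to a state
orthogonal to it in a strictly shorter time. -/
theorem swift_stmt_4 {V : Type*} [Fintype V] [DecidableEq V] (G : SimpleGraph V)
    [DecidableRel G.Adj] (v : V) (N : ℕ) (hdeg : G.degree v = N) (hN : 1 ≤ N)
    (Hs : Matrix V V ℂ) (hHs : IsChiralHamiltonian G Hs)
    (hswift : ∀ t : ℝ, 0 ≤ t →
      ‖(NormedSpace.exp ((-(t : ℂ) * Complex.I) • Hs)) v v‖ ^ 2 =
        Real.cos (Real.sqrt N * t) ^ 2) :
    (NormedSpace.exp ((-(((Real.pi / (2 * Real.sqrt N)) : ℝ) : ℂ) * Complex.I) • Hs))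
        v v = 0 ∧
      ∀ (H : Matrix V V ℂ), IsChiralHamiltonian G H →
        ∀ t : ℝ, 0 < t → t < Real.pi / (2 * Real.sqrt N) →
          (NormedSpace.exp ((-(t : ℂ) * Complex.I) • H)) v v ≠ 0 := by
  have hsqrtpos : 0 < Real.sqrt N := Real.sqrt_pos.mpr (by exact_mod_cast hN)
  constructor
  · set t0 : ℝ := Real.pi / (2 * Real.sqrt N) with ht0
    have ht0pos : 0 ≤ t0 := by positivity
    have h := hswift t0 ht0pos
    have harg : Real.sqrt N * t0 = Real.pi / 2 := by
      rw [ht0]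
      field_simp
    rw [harg, Real.cos_pi_div_two] at h
    have habs : ‖(NormedSpace.exp ((-(t0 : ℂ) * Complex.I) • Hs)) v v‖ = 0 := by
      have := pow_eq_zero_iff (n := 2) (by norm_num) |>.mp (by rw [h]; norm_num)
      exact this
    exact norm_eq_zero.mp habs
  · exact fun H hH t ht ht2 => no_orth' G v N hdeg hN H hH t ht ht2
end

section
/- Let G' be a finite simple graph in which every vertex has even degree. Then G' admits a swift phases configuration; moreover, one can choose the chiral adjacency matrix Ã so that every nonzero entry of Ã lies in {i, −i}. -/
open Finset

section Lists
variable {V : Type*} [Fintype V] [DecidableEq V]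

lemma sum_count_fst (L : List (V × V)) (j : V) :
    ∑ k : V, L.count (j, k) = L.countP (fun d => d.1 = j) := by
  induction L with
  | nil => simp
  | cons a L ih =>
    rw [List.countP_cons]
    simp only [List.count_cons]
    rw [Finset.sum_add_distrib, ih]
    congr 1
    rcases a with ⟨a1, a2⟩
    by_cases h : a1 = j
    · subst h
      simp [Prod.ext_iff, Finset.sum_ite_eq']
    · simp [Prod.ext_iff, fun k => (Ne.symm h : ¬ j = a1), h]

lemma sum_count_snd (L : List (V × V)) (j : V) :
    ∑ k : V, L.count (k, j) = L.countP (fun d => d.2 = j) := by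
  induction L with
  | nil => simp
  | cons a L ih =>
    rw [List.countP_cons]
    simp only [List.count_cons]
    rw [Finset.sum_add_distrib, ih]
    congr 1
    rcases a with ⟨a1, a2⟩
    by_cases h : a2 = j
    · subst h
      simp [Prod.ext_iff, Finset.sum_ite_eq']
    · simp [Prod.ext_iff, fun k => (Ne.symm h : ¬ j = a2), h]

lemma card_mem_fst {L : List (V × V)} (hL : L.Nodup) (x : V) :
    (univ.filter fun w => (x, w) ∈ L).card = L.countP (fun d => d.1 = x) := by
  classical
  rw [List.countP_eq_length_filter]
  set M := (L.filter (fun d => d.1 = x)).map Prod.snd with hM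
  have hMnd : M.Nodup := by
    refine (hL.filter _).map_on ?_
    intro d hd d' hd' hsnd
    have h1 : d.1 = x := by simpa using (List.mem_filter.mp hd).2
    have h2 : d'.1 = x := by simpa using (List.mem_filter.mp hd').2
    exact Prod.ext (h1.trans h2.symm) hsnd
  have hset : (univ.filter fun w => (x, w) ∈ L) = M.toFinset := by
    ext w
    simp only [mem_filter, mem_univ, true_and, List.mem_toFinset, hM, List.mem_map,
      List.mem_filter]
    constructor
    · intro h; exact ⟨(x, w), ⟨h, by simp⟩, rfl⟩
    · rintro ⟨⟨d1, d2⟩, ⟨hd, hx⟩, rfl⟩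
      have hx' : d1 = x := by simpa using hx
      subst hx'; exact hd
  rw [hset, List.toFinset_card_of_nodup hMnd, hM, List.length_map]

lemma card_mem_snd {L : List (V × V)} (hL : L.Nodup) (x : V) :
    (univ.filter fun w => (w, x) ∈ L).card = L.countP (fun d => d.2 = x) := by
  classical
  have := card_mem_fst (L := L.map Prod.swap) (hL.map Prod.swap_injective) x
  rw [List.countP_map] at this
  have h1 : (univ.filter fun w => (x, w) ∈ L.map Prod.swap)
      = (univ.filter fun w => (w, x) ∈ L) := by
    ext w
    simp only [mem_filter, List.mem_map]
    constructor
    · rintro ⟨_, ⟨d, hd, hswap⟩⟩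
      refine ⟨by simp, ?_⟩
      have : d = (w, x) := by
        rcases d with ⟨d1, d2⟩
        simpa [Prod.ext_iff, and_comm] using hswap
      rwa [this] at hd
    · rintro ⟨_, hd⟩
      exact ⟨by simp, (w, x), hd, rfl⟩
  rw [h1] at this
  rw [this]
  apply List.countP_congr
  intro d _
  simp [Prod.swap]

end Lists
open Finset SimpleGraph Walk

section Walks
variable {V : Type*} [Fintype V] [DecidableEq V] {G : SimpleGraph V}

lemma countP_fst_darts {u v : V} (p : G.Walk u v) (x : V) :
    (p.darts.map SimpleGraph.Dart.toProd).countP (fun d => d.1 = x)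
      = p.support.dropLast.count x := by
  rw [← SimpleGraph.Walk.map_fst_darts, List.count, List.countP_map, List.countP_map]
  apply List.countP_congr
  intro d _
  simp [Function.comp]

lemma countP_snd_darts {u v : V} (p : G.Walk u v) (x : V) :
    (p.darts.map SimpleGraph.Dart.toProd).countP (fun d => d.2 = x)
      = p.support.tail.count x := by
  rw [← SimpleGraph.Walk.map_snd_darts, List.count, List.countP_map, List.countP_map]
  apply List.countP_congr
  intro d _
  simp [Function.comp]

lemma count_dropLast_support {u v : V} (p : G.Walk u v) (x : V) :
    p.support.dropLast.count x + (if x = v then 1 else 0) = p.support.count x := by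
  have hne : p.support ≠ [] := p.support_ne_nil
  conv_rhs => rw [← List.dropLast_append_getLast hne]
  rw [List.count_append]
  congr 1
  rw [p.getLast_support]
  simp [List.count_singleton', eq_comm]

lemma count_tail_support {u v : V} (p : G.Walk u v) (x : V) :
    p.support.tail.count x + (if x = u then 1 else 0) = p.support.count x := by
  conv_rhs => rw [p.support_eq_cons]
  rw [List.count_cons]
  congr 1
  by_cases h : x = u
  · subst h; simp
  · rw [if_neg h, if_neg (by simp only [beq_iff_eq]; exact fun e => h e.symm)]

lemma mem_edges_iff_toProd {u v : V} (p : G.Walk u v) (j k : V) :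
    s(j, k) ∈ p.edges ↔
      (j, k) ∈ p.darts.map SimpleGraph.Dart.toProd ∨
      (k, j) ∈ p.darts.map SimpleGraph.Dart.toProd := by
  simp only [SimpleGraph.Walk.edges, List.mem_map]
  constructor
  · rintro ⟨d, hd, he⟩
    rcases (SimpleGraph.dart_edge_eq_mk'_iff.mp he) with h | h
    · exact Or.inl ⟨d, hd, h⟩
    · exact Or.inr ⟨d, hd, h⟩
  · rintro (⟨d, hd, h⟩ | ⟨d, hd, h⟩)
    · exact ⟨d, hd, SimpleGraph.dart_edge_eq_mk'_iff.mpr (Or.inl h)⟩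
    · exact ⟨d, hd, SimpleGraph.dart_edge_eq_mk'_iff.mpr (Or.inr h)⟩

lemma darts_nodup_of_trail {u v : V} {p : G.Walk u v} (hp : p.IsTrail) :
    (p.darts.map SimpleGraph.Dart.toProd).Nodup := by
  have h1 : p.darts.Nodup := by
    have := hp.edges_nodup
    rw [SimpleGraph.Walk.edges] at this
    exact this.of_map _
  exact h1.map SimpleGraph.Dart.toProd_injective

lemma not_both_mem_of_trail {u v : V} {p : G.Walk u v} (hp : p.IsTrail) {j k : V}
    (h1 : (j, k) ∈ p.darts.map SimpleGraph.Dart.toProd)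
    (h2 : (k, j) ∈ p.darts.map SimpleGraph.Dart.toProd) : False := by
  rcases List.mem_map.mp h1 with ⟨d1, hd1, he1⟩
  rcases List.mem_map.mp h2 with ⟨d2, hd2, he2⟩
  have hadj : G.Adj j k := by
    have := d1.adj; rw [he1] at this; exact this
  have hne : d1 ≠ d2 := by
    intro h
    rw [h, he2] at he1
    exact hadj.ne (congrArg Prod.fst he1.symm)
  have hedge : d1.edge = d2.edge := by
    rw [SimpleGraph.Dart.edge, SimpleGraph.Dart.edge, he1, he2]
    exact Sym2.eq_swap
  have hnd := hp.edges_nodup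
  rw [SimpleGraph.Walk.edges] at hnd
  exact hne (List.inj_on_of_nodup_map hnd hd1 hd2 hedge)

end Walks
section Incidence
variable {V : Type*} [Fintype V] [DecidableEq V] {G : SimpleGraph V}

open scoped Classical in
lemma card_incidence {u v : V} {p : G.Walk u v} (hp : p.IsTrail) (x : V) :
    (univ.filter fun w => s(x, w) ∈ p.edges).card
      = p.support.dropLast.count x + p.support.tail.count x := by
  classical
  set L := p.darts.map SimpleGraph.Dart.toProd with hL
  have hnd : L.Nodup := darts_nodup_of_trail hp
  have hsplit : (univ.filter fun w => s(x, w) ∈ p.edges)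
      = (univ.filter fun w => (x, w) ∈ L) ∪ (univ.filter fun w => (w, x) ∈ L) := by
    ext w
    simp only [mem_filter, mem_univ, true_and, mem_union]
    exact mem_edges_iff_toProd p x w
  rw [hsplit, card_union_of_disjoint, card_mem_fst hnd, card_mem_snd hnd,
    countP_fst_darts, countP_snd_darts]
  rw [Finset.disjoint_left]
  intro w h1 h2
  rw [mem_filter] at h1 h2
  exact not_both_mem_of_trail hp h1.2 h2.2

open scoped Classical in
lemma extend_trail (heven : ∀ x : V, Even ((univ.filter (G.Adj x)).card))
    {u v : V} {p : G.Walk u v} (hp : p.IsTrail) (huv : u ≠ v) :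
    ∃ w, G.Adj v w ∧ s(v, w) ∉ p.edges := by
  classical
  by_contra hcon
  push_neg at hcon
  have hset : (univ.filter (G.Adj v)) = (univ.filter fun w => s(v, w) ∈ p.edges) := by
    ext w
    simp only [mem_filter, mem_univ, true_and]
    exact ⟨fun h => hcon w h, fun h => p.adj_of_mem_edges h⟩
  have h1 := count_dropLast_support p v
  have h2 := count_tail_support p v
  rw [if_pos rfl] at h1
  rw [if_neg (Ne.symm huv)] at h2
  have hmem : 0 < p.support.count v :=
    List.count_pos_iff.mpr p.end_mem_support
  have hcard := card_incidence hp v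
  rw [← hset] at hcard
  have heq := heven v
  rw [hcard] at heq
  rw [Nat.even_iff] at heq
  omega

open scoped Classical in
lemma exists_closed_trail (heven : ∀ x : V, Even ((univ.filter (G.Adj x)).card))
    {a b : V} (hab : G.Adj a b) :
    ∃ (v : V) (c : G.Walk v v), c.IsTrail ∧ 0 < c.length := by
  classical
  by_contra hcon
  push_neg at hcon
  have key : ∀ n : ℕ, ∃ (u v : V) (p : G.Walk u v), p.IsTrail ∧ n ≤ p.length := by
    intro n
    induction n with
    | zero => exact ⟨a, a, SimpleGraph.Walk.nil, SimpleGraph.Walk.IsTrail.nil, Nat.zero_le _⟩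
    | succ n ih =>
      obtain ⟨u, v, p, hp, hlen⟩ := ih
      by_cases huv : u = v
      · subst huv
        have h0 := hcon u p hp
        have hn : n = 0 := by omega
        refine ⟨a, b, SimpleGraph.Walk.cons hab SimpleGraph.Walk.nil, ?_, by simp [hn]⟩
        simp [SimpleGraph.Walk.isTrail_def]
      · obtain ⟨w, hw, hnotmem⟩ := extend_trail heven hp huv
        refine ⟨u, w, p.concat hw, ?_, ?_⟩
        · rw [SimpleGraph.Walk.isTrail_def, SimpleGraph.Walk.edges_concat]
          rw [List.concat_eq_append, List.nodup_append]
          exact ⟨hp.edges_nodup, List.nodup_singleton _,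
            by simp; exact fun a ha h => hnotmem (h ▸ ha)⟩
        · rw [SimpleGraph.Walk.length_concat]; omega
  obtain ⟨u, v, p, hp, hlen⟩ := key (Fintype.card (Sym2 V) + 1)
  have hb : p.length ≤ Fintype.card (Sym2 V) := by
    rw [← SimpleGraph.Walk.length_edges]
    exact hp.edges_nodup.length_le_card
  omega

end Incidence

lemma count_eq_one_of_mem'' {α : Type*} [BEq α] [LawfulBEq α] {l : List α} (hl : l.Nodup)
    {a : α} (ha : a ∈ l) : l.count a = 1 := by
  induction l with
  | nil => simp at ha
  | cons b l ih =>
    rw [List.count_cons]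
    rcases List.mem_cons.mp ha with rfl | h
    · have h0 : l.count a = 0 := by
        rw [List.count_eq_zero]
        exact (List.nodup_cons.mp hl).1
      simp [h0]
    · rw [ih (List.nodup_cons.mp hl).2 h]
      have hne : a ≠ b := by
        rintro rfl
        exact (List.nodup_cons.mp hl).1 h
      simp [hne]
      exact fun e => hne e.symm

section Main
variable {V : Type*} [Fintype V] [DecidableEq V]

open scoped Classical in
lemma exists_flow : ∀ (n : ℕ) (G : SimpleGraph V),
    (univ.filter fun q : V × V => G.Adj q.1 q.2).card ≤ n →
    (∀ x : V, Even ((univ.filter (G.Adj x)).card)) →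
    ∃ f : V → V → ℤ, (∀ j k, f k j = -f j k) ∧
      (∀ j k, G.Adj j k → f j k = 1 ∨ f j k = -1) ∧
      (∀ j k, ¬ G.Adj j k → f j k = 0) ∧ ∀ j, ∑ k, f j k = 0 := by
  intro n
  induction n with
  | zero =>
    intro G hcard _
    have hno : ∀ j k, ¬ G.Adj j k := by
      intro j k hjk
      have : (j, k) ∈ univ.filter fun q : V × V => G.Adj q.1 q.2 := by
        simp [hjk]
      have := Finset.card_pos.mpr ⟨_, this⟩
      omega
    exact ⟨fun _ _ => 0, by simp, fun j k h => absurd h (hno j k), by simp, by simp⟩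
  | succ n ih =>
    intro G hcard heven
    by_cases hE : ∃ a b, G.Adj a b
    · obtain ⟨a, b, hab⟩ := hE
      obtain ⟨v₀, c, htc, hlenc⟩ := exists_closed_trail heven hab
      set L := c.darts.map SimpleGraph.Dart.toProd with hLdef
      have hndL : L.Nodup := darts_nodup_of_trail htc
      have hLadj : ∀ j k : V, (j, k) ∈ L → G.Adj j k := by
        intro j k hjk
        rcases List.mem_map.mp hjk with ⟨d, _, hd⟩
        have := d.adj
        rw [hd] at this
        exact this
      have hLmem : ∀ j k : V, s(j, k) ∈ c.edges ↔ (j, k) ∈ L ∨ (k, j) ∈ L :=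
        mem_edges_iff_toProd c
      set g : V → V → ℤ := fun j k => (L.count (j, k) : ℤ) - L.count (k, j) with hgdef
      have hg_zero : ∀ j k, s(j, k) ∉ c.edges → g j k = 0 := by
        intro j k h
        have h1 : (j, k) ∉ L := fun hm => h ((hLmem j k).mpr (Or.inl hm))
        have h2 : (k, j) ∉ L := fun hm => h ((hLmem j k).mpr (Or.inr hm))
        simp [hgdef, List.count_eq_zero.mpr h1, List.count_eq_zero.mpr h2]
      have hg_edge : ∀ j k, s(j, k) ∈ c.edges → g j k = 1 ∨ g j k = -1 := by
        intro j k h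
        rcases (hLmem j k).mp h with hm | hm
        · left
          have h2 : (k, j) ∉ L := fun hm' => not_both_mem_of_trail htc hm hm'
          have e1 : L.count (j, k) = 1 := count_eq_one_of_mem'' hndL hm
          have e2 : L.count (k, j) = 0 := List.count_eq_zero.mpr h2
          simp only [hgdef]
          omega
        · right
          have h2 : (j, k) ∉ L := fun hm' => not_both_mem_of_trail htc hm' hm
          have e1 : L.count (k, j) = 1 := count_eq_one_of_mem'' hndL hm
          have e2 : L.count (j, k) = 0 := List.count_eq_zero.mpr h2
          simp only [hgdef]
          omega
      have hclosed : ∀ x : V, c.support.dropLast.count x = c.support.tail.count x := by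
        intro x
        have h1 := count_dropLast_support c x
        have h2 := count_tail_support c x
        omega
      have hg_sum : ∀ j, ∑ k, g j k = 0 := by
        intro j
        have h1 : ∑ k, g j k
            = ((∑ k, L.count (j, k) : ℕ) : ℤ) - ((∑ k, L.count (k, j) : ℕ) : ℤ) := by
          rw [Finset.sum_sub_distrib]
          push_cast
          rfl
        rw [h1, sum_count_fst, sum_count_snd, countP_fst_darts, countP_snd_darts,
          hclosed j]
        simp
      -- the reduced graph
      set G₂ := G.deleteEdges {e | e ∈ c.edges} with hG2def
      have hG2adj : ∀ j k, G₂.Adj j k ↔ G.Adj j k ∧ s(j, k) ∉ c.edges := by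
        intro j k
        simp [hG2def, SimpleGraph.deleteEdges_adj]
      have heven₂ : ∀ x : V, Even ((univ.filter (G₂.Adj x)).card) := by
        intro x
        have hsplit : (univ.filter (G.Adj x))
            = (univ.filter (G₂.Adj x)) ∪ (univ.filter fun w => s(x, w) ∈ c.edges) := by
          ext w
          simp only [mem_filter, mem_univ, true_and, mem_union, hG2adj]
          constructor
          · intro h
            by_cases hm : s(x, w) ∈ c.edges
            · exact Or.inr hm
            · exact Or.inl ⟨h, hm⟩
          · rintro (⟨h, _⟩ | h)
            · exact h
            · exact c.adj_of_mem_edges h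
        have hdisj : Disjoint (univ.filter (G₂.Adj x))
            (univ.filter fun w => s(x, w) ∈ c.edges) := by
          rw [Finset.disjoint_left]
          intro w h1 h2
          rw [mem_filter] at h1 h2
          exact ((hG2adj x w).mp h1.2).2 h2.2
        have hcardeq : (univ.filter (G.Adj x)).card
            = (univ.filter (G₂.Adj x)).card
              + (univ.filter fun w => s(x, w) ∈ c.edges).card := by
          rw [hsplit, card_union_of_disjoint hdisj]
        have hinc := card_incidence htc x
        have hevinc : Even ((univ.filter fun w => s(x, w) ∈ c.edges).card) := by
          rw [hinc, hclosed x]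
          exact ⟨_, rfl⟩
        have h3 := heven x
        rw [Nat.even_iff] at h3 hevinc ⊢
        omega
      have hcard₂ : (univ.filter fun q : V × V => G₂.Adj q.1 q.2).card ≤ n := by
        have hdartne : c.darts ≠ [] := by
          intro h
          have := SimpleGraph.Walk.length_darts c
          rw [h] at this
          simp at this
          omega
        obtain ⟨d, hd⟩ := List.exists_mem_of_ne_nil _ hdartne
        have hdmem : s(d.toProd.1, d.toProd.2) ∈ c.edges := by
          apply (hLmem _ _).mpr
          exact Or.inl (List.mem_map_of_mem hd)
        have hss : (univ.filter fun q : V × V => G₂.Adj q.1 q.2)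
            ⊂ (univ.filter fun q : V × V => G.Adj q.1 q.2) := by
          constructor
          · intro q hq
            rw [mem_filter] at hq ⊢
            exact ⟨hq.1, ((hG2adj _ _).mp hq.2).1⟩
          · intro hsub
            have h1 : (d.toProd.1, d.toProd.2) ∈ univ.filter
                fun q : V × V => G.Adj q.1 q.2 := by
              simp only [mem_filter, mem_univ, true_and]
              exact d.adj
            have h2 := hsub h1
            rw [mem_filter] at h2
            exact ((hG2adj _ _).mp h2.2).2 hdmem
        have := Finset.card_lt_card hss
        omega
      obtain ⟨f₂, hf₂anti, hf₂edge, hf₂zero, hf₂sum⟩ := ih G₂ (by convert hcard₂) (fun x => by convert heven₂ x)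
      refine ⟨fun j k => g j k + f₂ j k, ?_, ?_, ?_, ?_⟩
      · intro j k
        have := hf₂anti j k
        simp only [hgdef]
        omega
      · intro j k hjk
        by_cases hm : s(j, k) ∈ c.edges
        · have hz : f₂ j k = 0 := by
            apply hf₂zero
            rw [hG2adj]
            tauto
          rcases hg_edge j k hm with h | h <;> simp [h, hz]
        · have hz : g j k = 0 := hg_zero j k hm
          have : G₂.Adj j k := (hG2adj j k).mpr ⟨hjk, hm⟩
          rcases hf₂edge j k this with h | h <;> simp [h, hz]
      · intro j k hjk
        have h1 : g j k = 0 := by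
          apply hg_zero
          intro hm
          exact hjk (c.adj_of_mem_edges hm)
        have h2 : f₂ j k = 0 := by
          apply hf₂zero
          rw [hG2adj]
          tauto
        simp [h1, h2]
      · intro j
        rw [Finset.sum_add_distrib, hg_sum j, hf₂sum j]
        simp
    · push_neg at hE
      exact ⟨fun _ _ => 0, by simp, fun j k h => absurd h (hE j k), by simp, by simp⟩

end Main

open Matrix

lemma filter_card_indep {α : Type*} [Fintype α] (p : α → Prop) (h1 h2 : DecidablePred p) :
    (@Finset.filter α p h1 Finset.univ).card = (@Finset.filter α p h2 Finset.univ).card := by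
  cases Subsingleton.elim h1 h2
  rfl

/-- If every vertex of a finite simple graph `G'` has even degree, then `G'` admits a
swift phases configuration, and one can moreover choose all the nonzero entries of the
chiral adjacency matrix in `{i, -i}`. -/
theorem swift_stmt_7 {V : Type*} [Fintype V] [DecidableEq V] (G' : SimpleGraph V)
    [DecidableRel G'.Adj] (heven : ∀ v : V, Even (G'.degree v)) :
    ∃ A : Matrix V V ℂ, IsChiralAdjacency G' A ∧ A *ᵥ (fun _ => 1) = 0 ∧
      ∀ j k, A j k ≠ 0 → A j k = Complex.I ∨ A j k = -Complex.I := by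
  have heven' : ∀ x : V, Even ((Finset.univ.filter (G'.Adj x)).card) := by
    intro x
    have h1 := heven x
    have h2 : G'.degree x = (Finset.univ.filter (G'.Adj x)).card := by
      rw [← SimpleGraph.neighborFinset_eq_filter]
      rfl
    rwa [h2] at h1
  obtain ⟨f, hanti, hedge, hzero, hsum⟩ :=
    exists_flow (Fintype.card (V × V)) G'
      (le_trans (Finset.card_le_card (Finset.subset_univ _)) (by simp))
      (fun x => (congrArg Even (filter_card_indep (G'.Adj x) _ _)).mp (heven' x))
  refine ⟨fun j k => Complex.I * (f j k : ℂ), ⟨?_, ?_, ?_⟩, ?_, ?_⟩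
  · show Matrix.conjTranspose ((fun j k => Complex.I * (f j k : ℂ)) : Matrix V V ℂ)
      = ((fun j k => Complex.I * (f j k : ℂ)) : Matrix V V ℂ)
    ext j k
    show star (Complex.I * (f k j : ℂ)) = Complex.I * (f j k : ℂ)
    simp only [star_mul', Complex.star_def, Complex.conj_I, map_intCast]
    rw [hanti j k]
    push_cast
    ring
  · intro j k hadj
    rcases hedge j k hadj with h | h <;> simp [h]
  · intro j k h
    simp [hzero j k h]
  · funext j
    simp only [Matrix.mulVec, dotProduct, mul_one, Pi.zero_apply]
    rw [← Finset.mul_sum]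
    have h0 : (∑ k, ((f j k : ℤ) : ℂ)) = 0 := by
      rw [← Int.cast_sum, hsum j, Int.cast_zero]
    rw [h0, mul_zero]
  · intro j k hne
    by_cases hadj : G'.Adj j k
    · rcases hedge j k hadj with h | h
      · left; simp [h]
      · right; simp [h]
    · exact absurd (by simp [hzero j k hadj]) hne
end

section
/- Let G' be a 3-regular finite simple graph. Then G' admits a swift phases configuration if and only if G' has a perfect matching. -/
open Matrix

lemma swiftQR (x y z : ℝ) (hx : |x| ≤ 1) (hy : |y| ≤ 1) (hz : |z| ≤ 1)
    (hs : x + y + z = 0) (hq : x^2 + y^2 + z^2 = 3/2) :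
    ((1/2 < x ∨ x = -1) ∧ ¬(1/2 < y ∨ y = -1) ∧ ¬(1/2 < z ∨ z = -1)) ∨
    (¬(1/2 < x ∨ x = -1) ∧ (1/2 < y ∨ y = -1) ∧ ¬(1/2 < z ∨ z = -1)) ∨
    (¬(1/2 < x ∨ x = -1) ∧ ¬(1/2 < y ∨ y = -1) ∧ (1/2 < z ∨ z = -1)) := by
  rw [abs_le] at hx hy hz
  have pair : ∀ a b c : ℝ, -1 ≤ a → a ≤ 1 → -1 ≤ b → b ≤ 1 → -1 ≤ c → c ≤ 1 →
      a + b + c = 0 → a^2 + b^2 + c^2 = 3/2 →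
      (1/2 < a ∨ a = -1) → (1/2 < b ∨ b = -1) → False := by
    intro a b c ha1 ha2 hb1 hb2 hc1 hc2 hs' hq' hQa hQb
    rcases hQa with ha | ha <;> rcases hQb with hb | hb
    · linarith
    · -- b = -1, 1/2 < a
      have h0 : (2*a - 1)^2 = 0 := by
        have hc' : c = 1 - a := by linarith
        rw [hb, hc'] at hq'; linear_combination 2*hq'
      have : 2*a - 1 = 0 := by
        have := sq_eq_zero_iff.mp h0; exact this
      linarith
    · -- a = -1, 1/2 < b
      have h0 : (2*b - 1)^2 = 0 := by
        have hc' : c = 1 - b := by linarith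
        rw [ha, hc'] at hq'; linear_combination 2*hq'
      have : 2*b - 1 = 0 := sq_eq_zero_iff.mp h0
      linarith
    · linarith
  by_cases hQx : (1/2 < x ∨ x = -1) <;> by_cases hQy : (1/2 < y ∨ y = -1) <;>
    by_cases hQz : (1/2 < z ∨ z = -1)
  · exact absurd (pair x y z hx.1 hx.2 hy.1 hy.2 hz.1 hz.2 hs hq hQx hQy) id
  · exact absurd (pair x y z hx.1 hx.2 hy.1 hy.2 hz.1 hz.2 hs hq hQx hQy) id
  · exact absurd (pair x z y hx.1 hx.2 hz.1 hz.2 hy.1 hy.2 (by linarith) (by linarith) hQx hQz) id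
  · exact Or.inl ⟨hQx, hQy, hQz⟩
  · exact absurd (pair y z x hy.1 hy.2 hz.1 hz.2 hx.1 hx.2 (by linarith) (by linarith) hQy hQz) id
  · exact Or.inr (Or.inl ⟨hQx, hQy, hQz⟩)
  · exact Or.inr (Or.inr ⟨hQx, hQy, hQz⟩)
  · exfalso
    push_neg at hQx hQy hQz
    have h1 : (x - 1/2) * (x + 1) ≤ 0 :=
      mul_nonpos_iff.mpr (Or.inr ⟨by linarith, by linarith⟩)
    have h2 : (y - 1/2) * (y + 1) ≤ 0 :=
      mul_nonpos_iff.mpr (Or.inr ⟨by linarith, by linarith⟩)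
    have h3 : (z - 1/2) * (z + 1) ≤ 0 :=
      mul_nonpos_iff.mpr (Or.inr ⟨by linarith, by linarith⟩)
    have hsum0 : (x - 1/2)*(x + 1) + (y - 1/2)*(y + 1) + (z - 1/2)*(z + 1) = 0 := by
      linear_combination hq + hs/2
    have e1 : (x - 1/2) * (x + 1) = 0 := by linarith
    have e2 : (y - 1/2) * (y + 1) = 0 := by linarith
    have e3 : (z - 1/2) * (z + 1) = 0 := by linarith
    have hx' : x = 1/2 := by
      rcases mul_eq_zero.mp e1 with h | h
      · linarith
      · exact absurd (by linarith) hQx.2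
    have hy' : y = 1/2 := by
      rcases mul_eq_zero.mp e2 with h | h
      · linarith
      · exact absurd (by linarith) hQy.2
    have hz' : z = 1/2 := by
      rcases mul_eq_zero.mp e3 with h | h
      · linarith
      · exact absurd (by linarith) hQz.2
    linarith

/-- The swift selection predicate. -/
def swiftP (z : ℂ) : Prop := 1/2 < z.re ∨ z = -1

lemma swiftP_re {z : ℂ} (hz : ‖z‖ = 1) : swiftP z ↔ (1/2 < z.re ∨ z.re = -1) := by
  constructor
  · rintro (h | h)
    · exact Or.inl h
    · right; rw [h]; simp
  · rintro (h | h)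
    · exact Or.inl h
    · right
      have hn : Complex.normSq z = 1 := by
        rw [← Complex.sq_norm, hz]; norm_num
      have him : z.im = 0 := by
        have := Complex.normSq_apply z
        nlinarith [this, hn, h]
      apply Complex.ext
      · simpa using h
      · simpa using him

lemma swiftP_star {z : ℂ} : swiftP (star z) ↔ swiftP z := by
  unfold swiftP
  constructor
  · rintro (h | h)
    · left; simpa using h
    · right; have := congrArg star h; simpa using this
  · rintro (h | h)
    · left; simpa using h
    · right; rw [h]; simp

/-- Key lemma: among three unit complex numbers summing to zero, exactly one is "swift". -/
lemma swiftKey (a b c : ℂ) (ha : ‖a‖ = 1) (hb : ‖b‖ = 1)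
    (hc : ‖c‖ = 1) (h : a + b + c = 0) :
    (swiftP a ∧ ¬ swiftP b ∧ ¬ swiftP c) ∨ (¬ swiftP a ∧ swiftP b ∧ ¬ swiftP c) ∨
    (¬ swiftP a ∧ ¬ swiftP b ∧ swiftP c) := by
  have hna : Complex.normSq a = 1 := by rw [← Complex.sq_norm, ha]; norm_num
  have hnb : Complex.normSq b = 1 := by rw [← Complex.sq_norm, hb]; norm_num
  have hnc : Complex.normSq c = 1 := by rw [← Complex.sq_norm, hc]; norm_num
  -- ab + bc + ca = 0
  have hconj : (starRingEnd ℂ) a + (starRingEnd ℂ) b + (starRingEnd ℂ) c = 0 := by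
    have := congrArg (starRingEnd ℂ) h
    simpa using this
  have habc : a*b + b*c + c*a = 0 := by
    have ha1 : a * (starRingEnd ℂ) a = 1 := by
      rw [Complex.mul_conj, hna]; norm_num
    have hb1 : b * (starRingEnd ℂ) b = 1 := by
      rw [Complex.mul_conj, hnb]; norm_num
    have hc1 : c * (starRingEnd ℂ) c = 1 := by
      rw [Complex.mul_conj, hnc]; norm_num
    linear_combination (a*b*c)*hconj - a*b*hc1 - b*c*ha1 - c*a*hb1
  have hsq : a^2 + b^2 + c^2 = 0 := by
    linear_combination (a+b+c)*h - 2*habc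
  -- real parts
  have hresq : ∀ z : ℂ, Complex.normSq z = 1 → (z^2).re = 2 * z.re^2 - 1 := by
    intro z hz
    have := Complex.normSq_apply z
    simp [pow_two, Complex.mul_re]
    nlinarith [this, hz]
  have hs : a.re + b.re + c.re = 0 := by
    have := congrArg Complex.re h
    simpa using this
  have hq : a.re^2 + b.re^2 + c.re^2 = 3/2 := by
    have := congrArg Complex.re hsq
    simp [Complex.add_re] at this
    rw [hresq a hna, hresq b hnb, hresq c hnc] at this
    linarith
  have hxa : |a.re| ≤ 1 := by
    have := Complex.abs_re_le_norm a; rwa [ha] at this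
  have hxb : |b.re| ≤ 1 := by
    have := Complex.abs_re_le_norm b; rwa [hb] at this
  have hxc : |c.re| ≤ 1 := by
    have := Complex.abs_re_le_norm c; rwa [hc] at this
  have := swiftQR a.re b.re c.re hxa hxb hxc hs hq
  rw [swiftP_re ha, swiftP_re hb, swiftP_re hc]
  exact this

noncomputable def swiftZeta : ℂ := ⟨1/2, Real.sqrt 3 / 2⟩

lemma swiftZeta_abs : ‖swiftZeta‖ = 1 := by
  have h3 : Real.sqrt 3 * Real.sqrt 3 = 3 := Real.mul_self_sqrt (by norm_num)
  rw [Complex.norm_def]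
  have : Complex.normSq swiftZeta = 1 := by
    rw [Complex.normSq_apply]
    show (1/2 : ℝ) * (1/2) + (Real.sqrt 3 / 2) * (Real.sqrt 3 / 2) = 1
    nlinarith [h3]
  rw [this, Real.sqrt_one]

lemma swiftZeta_add_star : swiftZeta + star swiftZeta = 1 := by
  apply Complex.ext <;> simp [swiftZeta] <;> norm_num

theorem bwd {V : Type*} [Fintype V] [DecidableEq V] (G' : SimpleGraph V)
    [DecidableRel G'.Adj] (hreg : G'.IsRegularOfDegree 3)
    (M : G'.Subgraph) (hM : M.IsPerfectMatching) :
    ∃ A : Matrix V V ℂ, IsChiralAdjacency G' A ∧ A *ᵥ (fun _ => 1) = 0 := by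
  classical
  rw [SimpleGraph.Subgraph.isPerfectMatching_iff] at hM
  -- the partner function
  set p : V → V := fun v => (hM v).choose with hp
  have hpadj : ∀ v, M.Adj v (p v) := fun v => (hM v).choose_spec.1
  have hpuniq : ∀ v w, M.Adj v w → w = p v := fun v w h => (hM v).choose_spec.2 w h
  -- the 2-regular graph of non-matching edges
  set H : SimpleGraph V := ⟨fun a b => G'.Adj a b ∧ ¬ M.Adj a b,
    ⟨fun a b h => ⟨h.1.symm, fun h' => h.2 h'.symm⟩⟩,
    ⟨fun a h => G'.loopless.irrefl a h.1⟩⟩ with hH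
  haveI : DecidableRel H.Adj := Classical.decRel _
  have hHnbr : ∀ v, H.neighborFinset v = (G'.neighborFinset v).erase (p v) := by
    intro v
    ext w
    rw [Finset.mem_erase, SimpleGraph.mem_neighborFinset, SimpleGraph.mem_neighborFinset]
    constructor
    · rintro ⟨h1, h2⟩
      exact ⟨fun he => h2 (he ▸ hpadj v), h1⟩
    · rintro ⟨h1, h2⟩
      exact ⟨h2, fun h => h1 (hpuniq v w h)⟩
  have hpmem : ∀ v, p v ∈ G'.neighborFinset v :=
    fun v => (SimpleGraph.mem_neighborFinset G' v (p v)).mpr (M.adj_sub (hpadj v))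
  have hHdeg : H.IsRegularOfDegree 2 := by
    intro v
    show (H.neighborFinset v).card = 2
    rw [hHnbr v, Finset.card_erase_of_mem (hpmem v),
      show (G'.neighborFinset v).card = 3 from hreg v]
  -- Hall's condition for choosing a distinct incident edge for each vertex
  have hall : ∀ s : Finset V, s.card ≤ (s.biUnion fun v => H.incidenceFinset v).card := by
    intro s
    set B := s.biUnion fun v => H.incidenceFinset v with hB
    have h2s : 2 * s.card = ∑ v ∈ s, (H.incidenceFinset v).card := by
      rw [Finset.sum_congr rfl (fun v _ => ?_)]
      · rw [Finset.sum_const, smul_eq_mul, mul_comm]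
      · rw [SimpleGraph.card_incidenceFinset_eq_degree, hHdeg v]
    have hsub : ∀ v ∈ s, H.incidenceFinset v ⊆ B :=
      fun v hv => Finset.subset_biUnion_of_mem (fun v => H.incidenceFinset v) hv
    have step : ∀ v ∈ s, (H.incidenceFinset v).card
        = ∑ e ∈ B, if e ∈ H.incidenceFinset v then 1 else 0 := by
      intro v hv
      rw [← Finset.card_filter]
      congr 1
      rw [Finset.filter_mem_eq_inter]
      exact (Finset.inter_eq_right.mpr (hsub v hv)).symm
    have hcount : ∑ v ∈ s, (H.incidenceFinset v).card
        = ∑ e ∈ B, (s.filter fun v => e ∈ H.incidenceFinset v).card := by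
      calc ∑ v ∈ s, (H.incidenceFinset v).card
          = ∑ v ∈ s, ∑ e ∈ B, (if e ∈ H.incidenceFinset v then 1 else 0) :=
            Finset.sum_congr rfl step
        _ = ∑ e ∈ B, ∑ v ∈ s, (if e ∈ H.incidenceFinset v then 1 else 0) := Finset.sum_comm
        _ = ∑ e ∈ B, (s.filter fun v => e ∈ H.incidenceFinset v).card :=
            Finset.sum_congr rfl (fun e _ => (Finset.card_filter _ _).symm)
    have hperedge : ∀ e ∈ B, (s.filter fun v => e ∈ H.incidenceFinset v).card ≤ 2 := by
      intro e _
      induction e using Sym2.inductionOn with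
      | hf x y =>
        have hss : (s.filter fun v => s(x,y) ∈ H.incidenceFinset v) ⊆ {x, y} := by
          intro v hv
          rw [Finset.mem_filter, SimpleGraph.mem_incidenceFinset] at hv
          have hv' : v ∈ s(x, y) := hv.2.2
          rw [Sym2.mem_iff] at hv'
          simpa using hv'
        calc (s.filter fun v => s(x,y) ∈ H.incidenceFinset v).card
            ≤ ({x, y} : Finset V).card := Finset.card_le_card hss
          _ ≤ 2 := (Finset.card_insert_le x {y}).trans (by simp)
    have : 2 * s.card ≤ 2 * B.card := by
      rw [h2s, hcount]
      calc ∑ e ∈ B, (s.filter fun v => e ∈ H.incidenceFinset v).card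
          ≤ ∑ e ∈ B, 2 := Finset.sum_le_sum hperedge
        _ = 2 * B.card := by rw [Finset.sum_const, smul_eq_mul, mul_comm]
    omega
  obtain ⟨f, hfinj, hf⟩ := (Finset.all_card_le_biUnion_card_iff_exists_injective
    (fun v => H.incidenceFinset v)).mp hall
  -- f v is an edge containing v
  have hfv : ∀ v, f v ∈ H.edgeSet ∧ v ∈ f v := by
    intro v
    have := hf v
    rw [SimpleGraph.mem_incidenceFinset] at this
    exact this
  -- every H-edge is hit by f
  have hedgecard : H.edgeFinset.card = Fintype.card V := by
    have := SimpleGraph.sum_degrees_eq_twice_card_edges H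
    have h2 : ∑ v, H.degree v = 2 * Fintype.card V := by
      rw [Finset.sum_congr rfl (fun v _ => hHdeg v), Finset.sum_const, smul_eq_mul,
        Finset.card_univ, mul_comm]
    omega
  have hfsurj : ∀ e ∈ H.edgeFinset, ∃ v, f v = e := by
    have himg : Finset.univ.image f ⊆ H.edgeFinset := by
      intro e he
      rw [Finset.mem_image] at he
      obtain ⟨v, _, rfl⟩ := he
      exact SimpleGraph.mem_edgeFinset.mpr (hfv v).1
    have hcards : H.edgeFinset.card ≤ (Finset.univ.image f).card := by
      rw [Finset.card_image_of_injective _ hfinj, Finset.card_univ, hedgecard]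
    have heq := Finset.eq_of_subset_of_card_le himg hcards
    intro e he
    have he' : e ∈ Finset.univ.image f := heq ▸ he
    rw [Finset.mem_image] at he'
    obtain ⟨v, _, hv⟩ := he'
    exact ⟨v, hv⟩
  -- exclusivity on each edge
  have hexcl : ∀ j k, H.Adj j k → (f j = s(j,k) ↔ ¬ f k = s(j,k)) := by
    intro j k hjk
    have hjk' : j ≠ k := hjk.ne
    constructor
    · intro h1 h2
      exact hjk' (hfinj (h1.trans h2.symm))
    · intro h2
      obtain ⟨v, hv⟩ := hfsurj s(j,k) (SimpleGraph.mem_edgeFinset.mpr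
        (H.mem_edgeSet.mpr hjk))
      have hvm : v ∈ s(j,k) := hv ▸ (hfv v).2
      rw [Sym2.mem_iff] at hvm
      rcases hvm with rfl | rfl
      · exact hv
      · exact absurd hv h2
  -- the matrix
  refine ⟨fun j k => if M.Adj j k then (-1 : ℂ) else if G'.Adj j k then
    (if f j = s(j,k) then swiftZeta else star swiftZeta) else 0, ⟨?_, ?_, ?_⟩, ?_⟩
  · -- Hermitian
    unfold Matrix.IsHermitian
    ext i j
    erw [Matrix.conjTranspose_apply]
    by_cases hm : M.Adj i j
    · have hm' : M.Adj j i := hm.symm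
      simp [hm, hm']
    · have hm' : ¬ M.Adj j i := fun h => hm h.symm
      by_cases hg : G'.Adj i j
      · have hg' : G'.Adj j i := hg.symm
        have hHij : H.Adj i j := ⟨hg, hm⟩
        have hswap : s(j,i) = s(i,j) := Sym2.eq_swap
        by_cases hfi : f i = s(i,j)
        · have hfj : ¬ f j = s(i,j) := (hexcl i j hHij).mp hfi
          simp [hm, hm', hg, hg', hfi, hswap, hfj]
        · have hfj : f j = s(i,j) := by
            by_contra hc
            exact hfi ((hexcl i j hHij).mpr hc)
          simp [hm, hm', hg, hg', hfi, hswap, hfj]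
      · have hg' : ¬ G'.Adj j i := fun h => hg h.symm
        simp [hm, hm', hg, hg']
  · -- abs one on edges
    intro j k hjk
    by_cases hm : M.Adj j k
    · simp [hm]
    · by_cases hfj : f j = s(j,k) <;>
        simp [hm, hjk, hfj, swiftZeta_abs, Complex.norm_conj, Complex.star_def]
  · intro j k hjk
    have hm : ¬ M.Adj j k := fun h => hjk (M.adj_sub h)
    simp [hjk, hm]
  · -- row sums
    funext v
    show ∑ k, (if M.Adj v k then (-1 : ℂ) else if G'.Adj v k then
      (if f v = s(v,k) then swiftZeta else star swiftZeta) else 0) * 1 = 0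
    simp only [mul_one]
    have hNv : G'.neighborFinset v = insert (p v) (H.neighborFinset v) := by
      rw [hHnbr v, Finset.insert_erase (hpmem v)]
    have hpnot : p v ∉ H.neighborFinset v := by
      rw [hHnbr v]; exact Finset.notMem_erase _ _
    obtain ⟨a, b, hab, hH2⟩ := Finset.card_eq_two.mp (hHdeg v)
    have haH : H.Adj v a := by
      rw [← SimpleGraph.mem_neighborFinset, hH2]; simp
    have hbH : H.Adj v b := by
      rw [← SimpleGraph.mem_neighborFinset, hH2]; simp
    -- reduce to the sum over neighbors
    have hred : ∑ k, (if M.Adj v k then (-1 : ℂ) else if G'.Adj v k then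
        (if f v = s(v,k) then swiftZeta else star swiftZeta) else 0)
        = ∑ k ∈ G'.neighborFinset v, (if M.Adj v k then (-1 : ℂ) else if G'.Adj v k then
        (if f v = s(v,k) then swiftZeta else star swiftZeta) else 0) := by
      refine (Finset.sum_subset (Finset.subset_univ _) ?_).symm
      intro k _ hk
      have hk' : ¬ G'.Adj v k := fun h => hk ((SimpleGraph.mem_neighborFinset G' v k).mpr h)
      have hm : ¬ M.Adj v k := fun h => hk' (M.adj_sub h)
      simp [hk', hm]
    rw [hred, hNv, Finset.sum_insert hpnot, hH2,
      Finset.sum_insert (by simp [hab]), Finset.sum_singleton]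
    have hApv : (if M.Adj v (p v) then (-1 : ℂ) else if G'.Adj v (p v) then
        (if f v = s(v, p v) then swiftZeta else star swiftZeta) else 0) = -1 := by
      simp [hpadj v]
    -- the other vertex of f v
    have ho : s(v, Sym2.Mem.other' (hfv v).2) = f v := Sym2.other_spec' (hfv v).2
    have hoadj : H.Adj v (Sym2.Mem.other' (hfv v).2) := by
      rw [← SimpleGraph.mem_edgeSet, ho]
      exact (hfv v).1
    have homem : Sym2.Mem.other' (hfv v).2 ∈ ({a, b} : Finset V) := by
      rw [← hH2, SimpleGraph.mem_neighborFinset]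
      exact hoadj
    rw [Finset.mem_insert, Finset.mem_singleton] at homem
    have key : (f v = s(v, a) ∧ ¬ f v = s(v, b)) ∨ (¬ f v = s(v, a) ∧ f v = s(v, b)) := by
      rcases homem with h | h
      · left
        constructor
        · rw [← ho, h]
        · rw [← ho, h]
          intro hc
          exact hab (Sym2.congr_right.mp hc)
      · right
        constructor
        · rw [← ho, h]
          intro hc
          exact hab (Sym2.congr_right.mp hc).symm
        · rw [← ho, h]
    rcases key with ⟨h1, h2⟩ | ⟨h1, h2⟩
    · rw [hApv, if_neg haH.2, if_neg hbH.2, if_pos haH.1, if_pos hbH.1, if_pos h1, if_neg h2]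
      linear_combination swiftZeta_add_star
    · rw [hApv, if_neg haH.2, if_neg hbH.2, if_pos haH.1, if_pos hbH.1, if_neg h1, if_pos h2]
      linear_combination swiftZeta_add_star

theorem fwd {V : Type*} [Fintype V] [DecidableEq V] (G' : SimpleGraph V)
    [DecidableRel G'.Adj] (hreg : G'.IsRegularOfDegree 3)
    (A : Matrix V V ℂ) (hA : IsChiralAdjacency G' A) (h0 : A *ᵥ (fun _ => 1) = 0) :
    ∃ M : G'.Subgraph, M.IsPerfectMatching := by
  classical
  obtain ⟨hHerm, habs, hzero⟩ := hA
  have hsym : ∀ j k, A k j = star (A j k) := by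
    intro j k
    have := congrFun (congrFun hHerm k) j
    rw [Matrix.conjTranspose_apply] at this
    exact this.symm
  refine ⟨⟨Set.univ, fun j k => G'.Adj j k ∧ swiftP (A j k), fun h => h.1,
    fun _ => trivial, ?_⟩, ?_⟩
  · refine ⟨?_⟩
    rintro j k ⟨h1, h2⟩
    refine ⟨h1.symm, ?_⟩
    rw [hsym j k, swiftP_star]
    exact h2
  rw [SimpleGraph.Subgraph.isPerfectMatching_iff]
  intro v
  have hrow : ∑ k, A v k = 0 := by
    have := congrFun h0 v
    simpa [Matrix.mulVec, dotProduct] using this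
  have hcard : (G'.neighborFinset v).card = 3 := hreg v
  obtain ⟨a, b, c, hab, hac, hbc, habc⟩ := Finset.card_eq_three.mp hcard
  have hmem : ∀ w, w ∈ G'.neighborFinset v ↔ (w = a ∨ w = b ∨ w = c) := by
    intro w; rw [habc]; simp
  have hadj : ∀ w, G'.Adj v w ↔ (w = a ∨ w = b ∨ w = c) := by
    intro w; rw [← hmem, SimpleGraph.mem_neighborFinset]
  have hsum3 : A v a + A v b + A v c = 0 := by
    have h1 : ∑ k ∈ G'.neighborFinset v, A v k = ∑ k, A v k :=
      Finset.sum_subset (Finset.subset_univ _)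
        (fun k _ hk => hzero v k (fun h => hk ((G'.mem_neighborFinset v k).mpr h)))
    rw [habc] at h1
    rw [Finset.sum_insert (by simp [hab, hac]), Finset.sum_insert (by simp [hbc]),
      Finset.sum_singleton] at h1
    rw [← add_assoc] at h1
    rw [h1, hrow]
  have haa : G'.Adj v a := (hadj a).mpr (Or.inl rfl)
  have hba : G'.Adj v b := (hadj b).mpr (Or.inr (Or.inl rfl))
  have hca : G'.Adj v c := (hadj c).mpr (Or.inr (Or.inr rfl))
  have key := swiftKey (A v a) (A v b) (A v c) (habs v a haa) (habs v b hba) (habs v c hca) hsum3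
  rcases key with ⟨h1, h2, h3⟩ | ⟨h1, h2, h3⟩ | ⟨h1, h2, h3⟩
  · refine ⟨a, ⟨haa, h1⟩, ?_⟩
    rintro w ⟨hw1, hw2⟩
    rcases (hadj w).mp hw1 with rfl | rfl | rfl
    · rfl
    · exact absurd hw2 h2
    · exact absurd hw2 h3
  · refine ⟨b, ⟨hba, h2⟩, ?_⟩
    rintro w ⟨hw1, hw2⟩
    rcases (hadj w).mp hw1 with rfl | rfl | rfl
    · exact absurd hw2 h1
    · rfl
    · exact absurd hw2 h3
  · refine ⟨c, ⟨hca, h3⟩, ?_⟩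
    rintro w ⟨hw1, hw2⟩
    rcases (hadj w).mp hw1 with rfl | rfl | rfl
    · exact absurd hw2 h1
    · exact absurd hw2 h2
    · rfl

/-- A `3`-regular finite simple graph admits a swift phases configuration (a chiral
adjacency matrix annihilating the all-ones vector) if and only if it has a perfect
matching. -/
theorem swift_stmt_8 {V : Type*} [Fintype V] [DecidableEq V] (G' : SimpleGraph V)
    [DecidableRel G'.Adj] (hreg : G'.IsRegularOfDegree 3) :
    (∃ A : Matrix V V ℂ, IsChiralAdjacency G' A ∧ A *ᵥ (fun _ => 1) = 0) ↔
      ∃ M : G'.Subgraph, M.IsPerfectMatching := by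
  constructor
  · rintro ⟨A, hA, h0⟩
    exact fwd G' hreg A hA h0
  · rintro ⟨M, hM⟩
    exact bwd G' hreg M hM
end

section
/- Let G' be a 3-regular finite simple graph that is Hamiltonian, i.e. it admits a Hamiltonian cycle (a cycle passing through every vertex exactly once). Then G' admits a swift phases configuration. -/
open Matrix

section Aux

/-- In a list closing up a cycle, every element is related to its cyclic successor. -/
lemma swift_list_cyclic_adj {α : Type*} [DecidableEq α] {R : α → α → Prop} {a : α} {l : List α}
    (hne : l ≠ []) (hchain : List.Chain' R (a :: l)) (hlast : l.getLast hne = a)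
    (hnodup : l.Nodup) {v : α} (hv : v ∈ l) : R v (l.next v hv) := by
  obtain ⟨⟨i, hi⟩, rfl⟩ := List.get_of_mem hv
  have hng : l.next (l.get ⟨i, hi⟩) hv =
      l.get ⟨(i + 1) % l.length, Nat.mod_lt _ (Nat.zero_lt_of_lt hi)⟩ :=
    List.next_getElem l hnodup i hi
  rw [hng]
  rcases Nat.lt_or_ge (i + 1) l.length with h | h
  · have hmod : (i + 1) % l.length = i + 1 := Nat.mod_eq_of_lt h
    have hc := List.isChain_iff_getElem.mp hchain.tail i (by
      simpa using h)
    convert hc using 2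
    all_goals simp [hmod]
  · have hieq : i + 1 = l.length := by omega
    have hmod : (i + 1) % l.length = 0 := by rw [hieq, Nat.mod_self]
    have h1 : l.get ⟨i, hi⟩ = a := by
      rw [← hlast, List.getLast_eq_getElem]
      simp only [List.get_eq_getElem]
      congr 1
      omega
    have hab : R a (l.head hne) := by
      have := (List.isChain_cons.mp hchain).1
      exact this _ (List.head?_eq_head hne)
    rw [h1]
    convert hab using 2
    rw [show (⟨(i + 1) % l.length, Nat.mod_lt _ (Nat.zero_lt_of_lt hi)⟩ : Fin l.length)
        = ⟨0, by omega⟩ from Fin.ext hmod]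
    exact List.get_mk_zero _

lemma swift_list_next_ne {α : Type*} [DecidableEq α] {l : List α} (hnodup : l.Nodup)
    (hlen : 2 ≤ l.length) {v : α} (hv : v ∈ l) : l.next v hv ≠ v := by
  obtain ⟨⟨i, hi⟩, rfl⟩ := List.get_of_mem hv
  have hng : l.next (l.get ⟨i, hi⟩) hv =
      l.get ⟨(i + 1) % l.length, Nat.mod_lt _ (Nat.zero_lt_of_lt hi)⟩ :=
    List.next_getElem l hnodup i hi
  rw [hng]
  intro hcontra
  have := List.nodup_iff_injective_get.mp hnodup hcontra
  have hval : (i + 1) % l.length = i := congrArg Fin.val this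
  rcases Nat.lt_or_ge (i + 1) l.length with h | h
  · rw [Nat.mod_eq_of_lt h] at hval; omega
  · have : i + 1 = l.length := by omega
    rw [this, Nat.mod_self] at hval
    omega

lemma swift_list_next_next_ne {α : Type*} [DecidableEq α] {l : List α} (hnodup : l.Nodup)
    (hlen : 3 ≤ l.length) {v : α} (hv : v ∈ l) :
    l.next (l.next v hv) (List.next_mem _ _ _) ≠ v := by
  obtain ⟨⟨i, hi⟩, rfl⟩ := List.get_of_mem hv
  have hng : l.next (l.get ⟨i, hi⟩) hv =
      l.get ⟨(i + 1) % l.length, Nat.mod_lt _ (Nat.zero_lt_of_lt hi)⟩ :=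
    List.next_getElem l hnodup i hi
  have key : ∀ (u : α) (hu : u ∈ l),
      u = l.get ⟨(i + 1) % l.length, Nat.mod_lt _ (Nat.zero_lt_of_lt hi)⟩ →
      l.next u hu ≠ l.get ⟨i, hi⟩ := by
    rintro u hu rfl
    have hng2 : l.next (l.get ⟨(i + 1) % l.length, Nat.mod_lt _ (Nat.zero_lt_of_lt hi)⟩) hu =
        l.get ⟨((i + 1) % l.length + 1) % l.length, Nat.mod_lt _ (Nat.zero_lt_of_lt hi)⟩ :=
      List.next_getElem l hnodup _ (Nat.mod_lt _ (Nat.zero_lt_of_lt hi))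
    rw [hng2]
    intro hcontra
    have := List.nodup_iff_injective_get.mp hnodup hcontra
    have hval : ((i + 1) % l.length + 1) % l.length = i := congrArg Fin.val this
    rcases Nat.lt_or_ge (i + 1) l.length with h | h
    · rw [Nat.mod_eq_of_lt h] at hval
      rcases Nat.lt_or_ge (i + 2) l.length with h2 | h2
      · rw [Nat.mod_eq_of_lt h2] at hval; omega
      · have : i + 2 = l.length := by omega
        rw [this, Nat.mod_self] at hval
        omega
    · have h1 : i + 1 = l.length := by omega
      rw [h1, Nat.mod_self, Nat.mod_eq_of_lt (by omega)] at hval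
      omega
  exact key _ (List.next_mem _ _ _) hng

/-- From a Hamiltonian cycle, extract a cyclic successor function. -/
lemma swift_exists_succ {V : Type*} [Fintype V] [DecidableEq V] (G : SimpleGraph V)
    (hcard : 4 ≤ Fintype.card V) (hham : G.IsHamiltonian) :
    ∃ f g : V → V, (∀ v, G.Adj v (f v)) ∧ (∀ v, g (f v) = v) ∧ (∀ v, f (g v) = v) ∧
      (∀ v, f (f v) ≠ v) := by
  obtain ⟨a, p, hp⟩ := hham (by omega)
  have hnn := hp.isCycle.not_nil
  have hmem : ∀ v, v ∈ p.support.tail := fun v => by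
    have := hp.isHamiltonian_tail.mem_support v
    rwa [SimpleGraph.Walk.support_tail_of_not_nil p hnn] at this
  have hnodup : p.support.tail.Nodup := by
    rw [List.nodup_iff_count_le_one]
    intro v
    have := hp.isHamiltonian_tail v
    rw [SimpleGraph.Walk.support_tail_of_not_nil p hnn] at this
    omega
  have hlen : p.support.tail.length = Fintype.card V := by
    have h1 : p.support.length = p.length + 1 := SimpleGraph.Walk.length_support p
    have h2 := hp.length_eq
    simp [List.length_tail, h1, h2]
  have hne : p.support.tail ≠ [] := by
    intro h
    rw [h] at hlen
    simp at hlen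
    omega
  have hlast : p.support.tail.getLast hne = a := by
    rw [List.getLast_tail]
    exact p.getLast_support
  have hchain : List.Chain' G.Adj (a :: p.support.tail) := by
    have := p.isChain_adj_support
    rwa [SimpleGraph.Walk.support_eq_cons p] at this
  refine ⟨fun v => p.support.tail.next v (hmem v), fun v => p.support.tail.prev v (hmem v),
    ?_, ?_, ?_, ?_⟩
  · intro v
    exact swift_list_cyclic_adj hne hchain hlast hnodup (hmem v)
  · intro v
    exact List.prev_next _ hnodup v (hmem v)
  · intro v
    exact List.next_prev _ hnodup v (hmem v)
  · intro v
    exact swift_list_next_next_ne hnodup (by omega) (hmem v)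

end Aux

/-- A Hamiltonian `3`-regular finite simple graph always admits a swift phases
configuration. -/
theorem swift_stmt_11 {V : Type*} [Fintype V] [DecidableEq V] (G' : SimpleGraph V)
    [DecidableRel G'.Adj] (hreg : G'.IsRegularOfDegree 3)
    (hham : G'.IsHamiltonian) :
    ∃ A : Matrix V V ℂ, IsChiralAdjacency G' A ∧ A *ᵥ (fun _ => 1) = 0 := by
  cases isEmpty_or_nonempty V with
  | inl h =>
    refine ⟨0, ⟨Matrix.isHermitian_zero, fun j => isEmptyElim j, fun j => isEmptyElim j⟩, ?_⟩
    funext j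
    exact isEmptyElim j
  | inr h =>
    have hcard : 4 ≤ Fintype.card V := by
      obtain ⟨v⟩ := h
      have := G'.degree_lt_card_verts v
      rw [hreg v] at this
      omega
    obtain ⟨f, g, hadj, hgf, hfg, hff⟩ := swift_exists_succ G' hcard hham
    -- the cube root of unity
    set ω : ℂ := ⟨-1/2, Real.sqrt 3 / 2⟩ with hω
    have h3 : Real.sqrt 3 * Real.sqrt 3 = 3 := Real.mul_self_sqrt (by norm_num)
    have hns : Complex.normSq ω = 1 := by
      rw [hω, Complex.normSq_mk]
      nlinarith [h3]
    have habs : ‖ω‖ = 1 := by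
      rw [Complex.norm_def, hns, Real.sqrt_one]
    have hsum : ω + (starRingEnd ℂ) ω + 1 = 0 := by
      apply Complex.ext <;> simp [hω]
    -- basic facts about f and g
    have hfv_ne : ∀ v, f v ≠ v := fun v hv => hff v (by rw [hv, hv])
    have hadj_g : ∀ v, G'.Adj v (g v) := fun v => by
      have := hadj (g v)
      rw [hfg v] at this
      exact this.symm
    have hgne : ∀ v, g v ≠ f v := fun v hv => by
      have : f (g v) = f (f v) := by rw [hv]
      rw [hfg v] at this
      exact hff v this.symm
    have hiff : ∀ v w, v = f w ↔ w = g v := by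
      intro v w
      constructor
      · intro hv
        rw [hv, hgf w]
      · intro hw
        rw [hw, hfg v]
    refine ⟨Matrix.of fun v w =>
      if G'.Adj v w then (if w = f v then ω else if v = f w then (starRingEnd ℂ) ω else 1)
      else 0, ⟨?_, ?_, ?_⟩, ?_⟩
    · -- Hermitian
      ext i j
      simp only [Matrix.conjTranspose_apply, Matrix.of_apply]
      by_cases ha : G'.Adj i j
      · have ha' : G'.Adj j i := ha.symm
        by_cases h1 : j = f i
        · subst h1
          have h2 : ¬ i = f (f i) := fun hc => hff i hc.symm
          rw [if_pos ha', if_neg h2, if_pos rfl, if_pos ha, if_pos rfl]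
          exact Complex.conj_conj ω
        · by_cases h2 : i = f j
          · subst h2
            rw [if_pos ha', if_pos rfl, if_pos ha, if_neg h1, if_pos rfl]
            rfl
          · rw [if_pos ha', if_neg h2, if_neg h1, if_pos ha, if_neg h1, if_neg h2]
            exact star_one ℂ
      · have ha' : ¬ G'.Adj j i := fun hc => ha hc.symm
        rw [if_neg ha, if_neg ha']
        exact star_zero ℂ
    · -- unit modulus on edges
      intro j k hjk
      simp only [Matrix.of_apply, if_pos hjk]
      split_ifs
      · exact habs
      · rw [Complex.norm_conj]; exact habs
      · simp
    · -- zero off edges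
      intro j k hjk
      simp [Matrix.of_apply, hjk]
    · -- row sums vanish
      funext v
      show (∑ w, _) = _
      simp only [Matrix.of_apply, mul_one, Pi.zero_apply]
      have hzero : ∀ w ∈ Finset.univ, w ∉ G'.neighborFinset v →
          (if G'.Adj v w then (if w = f v then ω else if v = f w then (starRingEnd ℂ) ω else 1)
            else 0) = 0 := by
        intro w _ hw
        rw [SimpleGraph.mem_neighborFinset] at hw
        simp [hw]
      rw [← Finset.sum_subset (Finset.subset_univ (G'.neighborFinset v)) hzero]
      have hfs : f v ∈ G'.neighborFinset v := (SimpleGraph.mem_neighborFinset _ _ _).mpr (hadj v)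
      have hgs : g v ∈ G'.neighborFinset v :=
        (SimpleGraph.mem_neighborFinset _ _ _).mpr (hadj_g v)
      set t := G'.neighborFinset v \ {f v, g v} with ht
      have hsplit : G'.neighborFinset v = insert (f v) (insert (g v) t) := by
        ext w
        simp only [ht, Finset.mem_insert, Finset.mem_sdiff, Finset.mem_insert,
          Finset.mem_singleton]
        constructor
        · intro hw
          by_cases h1 : w = f v
          · exact Or.inl h1
          · by_cases h2 : w = g v
            · exact Or.inr (Or.inl h2)
            · exact Or.inr (Or.inr ⟨hw, not_or.mpr ⟨h1, h2⟩⟩)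
        · intro hw
          rcases hw with h1 | h2 | h3
          · rw [h1]; exact hfs
          · rw [h2]; exact hgs
          · exact h3.1
      have hft : f v ∉ insert (g v) t := by
        intro hc
        rcases Finset.mem_insert.mp hc with h | h
        · exact hgne v h.symm
        · rw [ht, Finset.mem_sdiff] at h
          exact h.2 (Finset.mem_insert_self _ _)
      have hgt : g v ∉ t := by
        intro hc
        rw [ht, Finset.mem_sdiff] at hc
        exact hc.2 (by simp)
      have htcard : t.card = 1 := by
        have hsub : ({f v, g v} : Finset V) ⊆ G'.neighborFinset v := by
          intro w hw
          simp only [Finset.mem_insert, Finset.mem_singleton] at hw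
          rcases hw with rfl | rfl
          · exact hfs
          · exact hgs
        have hdeg : (G'.neighborFinset v).card = 3 := by
          rw [G'.card_neighborFinset_eq_degree]
          exact hreg v
        rw [ht, Finset.card_sdiff_of_subset hsub, hdeg, Finset.card_pair (hgne v).symm]
      rw [hsplit, Finset.sum_insert hft, Finset.sum_insert hgt]
      have e1 : (if G'.Adj v (f v) then
          (if f v = f v then ω else if v = f (f v) then (starRingEnd ℂ) ω else 1) else 0) = ω := by
        simp [hadj v]
      have e2 : (if G'.Adj v (g v) then
          (if g v = f v then ω else if v = f (g v) then (starRingEnd ℂ) ω else 1) else 0) =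
          (starRingEnd ℂ) ω := by
        rw [if_pos (hadj_g v), if_neg (hgne v), if_pos (hfg v).symm]
      have e3 : ∀ w ∈ t, (if G'.Adj v w then
          (if w = f v then ω else if v = f w then (starRingEnd ℂ) ω else 1) else 0) = 1 := by
        intro w hw
        simp only [ht, Finset.mem_sdiff, Finset.mem_insert, Finset.mem_singleton,
          SimpleGraph.mem_neighborFinset] at hw
        push_neg at hw
        obtain ⟨hw1, hw2, hw3⟩ := hw
        rw [if_pos hw1, if_neg hw2, if_neg (fun hc => hw3 ((hiff v w).mp hc))]
      rw [e1, e2, Finset.sum_congr rfl e3]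
      simp [htcard]
      linear_combination hsum
end

section
/- For every integer N ≥ 3, the complete graph K_N admits a swift phases configuration: there exists a Hermitian N×N matrix Ã with all diagonal entries zero, all off-diagonal entries of modulus 1, and Ã·1 = 0 for the all-ones vector 1. -/
open Matrix

/-- For every `N ≥ 3`, the complete graph `K_N` admits a swift phases configuration:
a Hermitian `N × N` matrix with zero diagonal, all off-diagonal entries of modulus `1`,
annihilating the all-ones vector. -/
theorem swift_stmt_12 (N : ℕ) (hN : 3 ≤ N) :
    ∃ A : Matrix (Fin N) (Fin N) ℂ, A.IsHermitian ∧ (∀ i, A i i = 0) ∧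
      (∀ i j, i ≠ j → ‖A i j‖ = 1) ∧ A *ᵥ (fun _ => 1) = 0 := by
  obtain ⟨M, rfl⟩ : ∃ M, N = M + 1 := ⟨N - 1, by omega⟩
  have hM : 2 ≤ M := by omega
  have hMR : (0:ℝ) < (M:ℝ) := by positivity
  have hMne : (M:ℝ) ≠ 0 := ne_of_gt hMR
  set θ : ℕ → ℝ := fun v => (2 * (v:ℝ) - 1) * Real.pi / M with hθ
  set c : Fin (M+1) → ℂ := fun m => Complex.exp ((θ m.val : ℝ) * Complex.I) with hc
  set A : Matrix (Fin (M+1)) (Fin (M+1)) ℂ :=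
    fun i j => if i = j then 0 else c (j - i) with hA
  -- conjugation of exp of real multiple of I
  have hconjexp : ∀ x : ℝ, (starRingEnd ℂ) (Complex.exp ((x:ℝ) * Complex.I))
      = Complex.exp ((-x : ℝ) * Complex.I) := by
    intro x
    rw [← Complex.exp_conj]
    congr 1
    simp [Complex.conj_I]
  -- key symmetry : c(-m) = conj (c m) for m ≠ 0
  have hsym : ∀ m : Fin (M+1), m ≠ 0 → c (-m) = (starRingEnd ℂ) (c m) := by
    intro m hm
    have hv1 : 1 ≤ m.val := by
      rcases Nat.eq_zero_or_pos m.val with h | h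
      · exact absurd (Fin.ext (by simpa using h)) hm
      · exact h
    have hvlt : m.val < M + 1 := m.isLt
    have hneg : (-m).val = (M + 1) - m.val := by
      rw [Fin.coe_neg]
      exact Nat.mod_eq_of_lt (by omega)
    rw [hconjexp]
    rw [hc]
    simp only [hneg]
    have hcast : ((M + 1 - m.val : ℕ) : ℝ) = (M:ℝ) + 1 - (m.val : ℝ) := by
      push_cast [Nat.cast_sub (le_of_lt hvlt)]
      ring
    have key : θ (M + 1 - m.val) = 2 * Real.pi + (- θ m.val) := by
      rw [hθ]
      simp only [hcast]
      field_simp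
      ring
    have hexp : ((θ (M + 1 - m.val) : ℝ) : ℂ) * Complex.I
        = 2 * (Real.pi : ℂ) * Complex.I + ((-θ m.val : ℝ) : ℂ) * Complex.I := by
      rw [key]; push_cast; ring
    rw [hexp, Complex.exp_add, Complex.exp_two_pi_mul_I, one_mul]
  refine ⟨A, ?_, ?_, ?_, ?_⟩
  · -- Hermitian
    ext i j
    rw [conjTranspose_apply, hA]
    by_cases hij : i = j
    · simp [hij]
    · have hji : ¬ j = i := fun h => hij h.symm
      simp only [if_neg hij, if_neg hji]
      have h0 : j - i ≠ 0 := sub_ne_zero.mpr (fun h => hij h.symm)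
      have : i - j = -(j - i) := (neg_sub j i).symm
      rw [this, hsym _ h0]
      simp
  · intro i; simp [hA]
  · intro i j hij
    rw [hA]
    simp only [if_neg hij]
    exact Complex.norm_exp_ofReal_mul_I _
  · -- row sums vanish
    funext i
    show (∑ j, A i j * 1) = 0
    simp only [mul_one]
    have hre : ∑ j, A i j = ∑ j : Fin (M+1), A i (j + i) :=
      (Equiv.sum_comp (Equiv.addRight i) (A i)).symm
    rw [hre]
    have hterm : ∀ j : Fin (M+1), A i (j + i) = if j = 0 then 0 else c j := by
      intro j
      rw [hA]
      simp only
      by_cases hj : j = 0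
      · simp [hj]
      · have h1 : ¬ i = j + i := by
          intro h
          exact hj (by simpa using (right_eq_add.mp h))
        rw [if_neg h1, if_neg hj, add_sub_cancel_right]
    simp only [hterm]
    -- turn into sum over range
    have hcv : ∀ j : Fin (M+1), (if j = 0 then (0:ℂ) else c j)
        = (fun v : ℕ => if v = 0 then (0:ℂ) else Complex.exp ((θ v : ℝ) * Complex.I)) j.val := by
      intro j
      by_cases hj : j = 0
      · simp [hj]
      · have : j.val ≠ 0 := fun h => hj (Fin.ext (by simpa using h))
        simp [hj, this, hc]
    calc ∑ j : Fin (M+1), (if j = 0 then (0:ℂ) else c j)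
        = ∑ v ∈ Finset.range (M+1),
            (if v = 0 then (0:ℂ) else Complex.exp ((θ v : ℝ) * Complex.I)) := by
          rw [← Fin.sum_univ_eq_sum_range]
          exact Finset.sum_congr rfl fun j _ => hcv j
      _ = ∑ v ∈ Finset.range M,
            Complex.exp ((θ (v+1) : ℝ) * Complex.I) + 0 := by
          rw [Finset.sum_range_succ']
          simp
      _ = 0 := by
          rw [add_zero]
          set x : ℂ := Complex.exp (((2 * Real.pi / M : ℝ)) * Complex.I) with hx
          have hxpow : ∀ v : ℕ, Complex.exp ((θ (v+1) : ℝ) * Complex.I)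
              = Complex.exp (((Real.pi / M : ℝ)) * Complex.I) * x ^ v := by
            intro v
            rw [hx, ← Complex.exp_nat_mul, ← Complex.exp_add]
            congr 1
            simp only [hθ]
            push_cast
            ring
          simp only [hxpow]
          rw [← Finset.mul_sum]
          have hx1 : x ≠ 1 := by
            intro h
            rw [hx] at h
            obtain ⟨n, hn⟩ := Complex.exp_eq_one_iff.mp h
            have him := congrArg Complex.im hn
            simp [Complex.mul_im] at him
            -- him : 2 * π / M = n * (2 * π)
            have hpi := Real.pi_pos
            have hM2 : (2:ℝ) ≤ (M:ℝ) := by exact_mod_cast hM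
            have hn1 : (1:ℝ) = n * M := by
              field_simp at him
              nlinarith [him]
            have hnpos : (0:ℝ) < (n:ℝ) := by nlinarith
            have hn1' : (1:ℤ) ≤ n := by exact_mod_cast hnpos
            have h2 : (2:ℝ) ≤ (n:ℝ) * M := by
              have h1n : (1:ℝ) ≤ (n:ℝ) := by exact_mod_cast hn1'
              nlinarith
            linarith
          have hxM : x ^ M = 1 := by
            rw [hx, ← Complex.exp_nat_mul]
            rw [show (M:ℂ) * (((2 * Real.pi / M : ℝ)) * Complex.I)
                = 2 * (Real.pi:ℂ) * Complex.I by
              have hMC : ((M:ℕ):ℂ) ≠ 0 := Nat.cast_ne_zero.mpr (by omega)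
              push_cast
              field_simp]
            exact Complex.exp_two_pi_mul_I
          rw [geom_sum_eq hx1, hxM]
          simp
end
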